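/- arXiv:1708.04640 — 8 statements merged into one kernel-verified Lean document; each statement's English description precedes it below -/
import Mathlib

section
/- For every finite simple graph G = (V,E) and every integer r ≥ 1, the minimum size of a percolating set of edges in the r-bond bootstrap percolation process is at most r times the minimum size of a percolating set of vertices in the r-neighbour bootstrap percolation process; that is, m_e(G,r) ≤ r · m(G,r). -/
open Polynomial

/-- A set `S` of edges is closed under the `r`-bond bootstrap infection rule: whenever a
vertex `v` is incident to at least `r` edges in `S`, all edges incident to `v` are in `S`. -/
def BondClosed {V : Type*} (G : SimpleGraph V) (r : ℕ) (S : Set (Sym2 V)) : Prop :=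
  ∀ v : V, r ≤ {u | G.Adj v u ∧ s(v, u) ∈ S}.ncard → ∀ w : V, G.Adj v w → s(v, w) ∈ S

/-- `F` percolates in the `r`-bond bootstrap process on `G`: every set of edges containing `F`
that is closed under the infection rule contains all edges of `G`. -/
def BondPercolates {V : Type*} (G : SimpleGraph V) (r : ℕ) (F : Set (Sym2 V)) : Prop :=
  ∀ S : Set (Sym2 V), F ⊆ S → BondClosed G r S → G.edgeSet ⊆ S

/-- `mEdge G r` is the minimum size of a set of edges of `G` percolating in the `r`-bond
bootstrap process, i.e. `m_e(G,r)`. -/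
noncomputable def mEdge {V : Type*} (G : SimpleGraph V) (r : ℕ) : ℕ :=
  sInf {n | ∃ F : Finset (Sym2 V), ↑F ⊆ G.edgeSet ∧ BondPercolates G r ↑F ∧ F.card = n}

/-- A set `S` of vertices is closed under the `r`-neighbour bootstrap infection rule. -/
def NeighClosed {V : Type*} (G : SimpleGraph V) (r : ℕ) (S : Set V) : Prop :=
  ∀ v : V, r ≤ {u | G.Adj v u ∧ u ∈ S}.ncard → v ∈ S

/-- `A` percolates in the `r`-neighbour bootstrap process on `G`. -/
def NeighPercolates {V : Type*} (G : SimpleGraph V) (r : ℕ) (A : Set V) : Prop :=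
  ∀ S : Set V, A ⊆ S → NeighClosed G r S → ∀ v : V, v ∈ S

/-- `mVertex G r` is the minimum size of a percolating set of vertices for the `r`-neighbour
bootstrap process, i.e. `m(G,r)`. -/
noncomputable def mVertex {V : Type*} (G : SimpleGraph V) (r : ℕ) : ℕ :=
  sInf {n | ∃ A : Finset V, NeighPercolates G r ↑A ∧ A.card = n}

/-- `c` is a proper edge colouring of `G`: distinct edges sharing an endpoint get distinct
colours. -/
def ProperEdgeColouring {V : Type*} (G : SimpleGraph V) (c : Sym2 V → ℝ) : Prop :=
  ∀ e₁ ∈ G.edgeSet, ∀ e₂ ∈ G.edgeSet, e₁ ≠ e₂ → (∃ v : V, v ∈ e₁ ∧ v ∈ e₂) → c e₁ ≠ c e₂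

/-- The space `W^r_{G,c}` of functions on edges recognized by systems of polynomials of degree
at most `r - 1` (degree `< r`) attached to the vertices. Functions are represented as functions
on `Sym2 V` vanishing outside the edge set of `G`. -/
noncomputable def Wspace {V : Type*} (G : SimpleGraph V) (c : Sym2 V → ℝ) (r : ℕ) :
    Submodule ℝ (Sym2 V → ℝ) where
  carrier := {φ | (∀ e, e ∉ G.edgeSet → φ e = 0) ∧
    ∃ p : V → ℝ[X], (∀ v, (p v).degree < (r : WithBot ℕ)) ∧
      ∀ v w : V, G.Adj v w → (p v).eval (c s(v, w)) = φ s(v, w)}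
  zero_mem' := ⟨fun _ _ => rfl, fun _ => 0,
    fun _ => by simp [Polynomial.degree_zero], fun _ _ _ => by simp⟩
  add_mem' := by
    rintro φ ψ ⟨hφ0, p, hp, hpe⟩ ⟨hψ0, q, hq, hqe⟩
    exact ⟨fun e he => by simp [hφ0 e he, hψ0 e he], fun v => p v + q v,
      fun v => lt_of_le_of_lt (Polynomial.degree_add_le _ _) (max_lt (hp v) (hq v)),
      fun v w hvw => by simp [hpe v w hvw, hqe v w hvw]⟩
  smul_mem' := by
    rintro a φ ⟨hφ0, p, hp, hpe⟩
    exact ⟨fun e he => by simp [hφ0 e he], fun v => a • p v,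
      fun v => lt_of_le_of_lt (Polynomial.degree_smul_le _ _) (hp v),
      fun v w hvw => by simp [hpe v w hvw]⟩

/-- For a finite simple graph `G` and `r ≥ 1`, `m_e(G,r) ≤ r * m(G,r)`. -/
theorem stmt0 {V : Type*} [Fintype V] (G : SimpleGraph V) (r : ℕ) (hr : 1 ≤ r) :
    mEdge G r ≤ r * mVertex G r := by
  classical
  have hne : ∃ n, n ∈ {n | ∃ A : Finset V, NeighPercolates G r ↑A ∧ A.card = n} :=
    ⟨(Finset.univ : Finset V).card, Finset.univ, fun S hS _ v => hS (by simp), rfl⟩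
  obtain ⟨A, hA, hAcard⟩ : ∃ A : Finset V, NeighPercolates G r ↑A ∧ A.card = mVertex G r :=
    Nat.sInf_mem hne
  have hsub : ∀ a : V, ∃ t ⊆ G.neighborFinset a, t.card = min r (G.degree a) := fun a =>
    Finset.exists_subset_card_eq (min_le_right _ _)
  choose N hNsub hNcard using hsub
  set F : Finset (Sym2 V) := A.biUnion (fun a => (N a).image (fun u => s(a, u))) with hF
  have hFedge : ↑F ⊆ G.edgeSet := by
    intro e he
    simp only [hF, Finset.coe_biUnion, Set.mem_iUnion, Finset.mem_coe, Finset.mem_image] at he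
    obtain ⟨a, _, u, hu, rfl⟩ := he
    exact (G.mem_neighborFinset a u).mp (hNsub a hu)
  have hperc : BondPercolates G r ↑F := by
    intro S hFS hcl
    set T : Set V := {v | ∀ w, G.Adj v w → s(v, w) ∈ S} with hT
    have hAT : ↑A ⊆ T := by
      intro a haA
      by_cases hdeg : r ≤ G.degree a
      · apply hcl a
        have hsubset : (↑(N a) : Set V) ⊆ {u | G.Adj a u ∧ s(a, u) ∈ S} := by
          intro u hu
          refine ⟨(G.mem_neighborFinset a u).mp (hNsub a hu), hFS ?_⟩
          simp only [hF, Finset.coe_biUnion, Set.mem_iUnion, Finset.mem_coe, Finset.mem_image]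
          exact ⟨a, haA, u, hu, rfl⟩
        calc r = (N a).card := by rw [hNcard a, min_eq_left hdeg]
          _ = (↑(N a) : Set V).ncard := (Set.ncard_coe_finset _).symm
          _ ≤ _ := Set.ncard_le_ncard hsubset (Set.toFinite _)
      · intro w hw
        apply hFS
        have hNeq : N a = G.neighborFinset a :=
          Finset.eq_of_subset_of_card_le (hNsub a)
            (by rw [hNcard a, min_eq_right (le_of_not_ge hdeg)]; rfl)
        simp only [hF, Finset.coe_biUnion, Set.mem_iUnion, Finset.mem_coe, Finset.mem_image]
        exact ⟨a, haA, w, by rw [hNeq]; exact (G.mem_neighborFinset a w).mpr hw, rfl⟩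
    have hTcl : NeighClosed G r T := by
      intro v hv
      have hsubset : {u | G.Adj v u ∧ u ∈ T} ⊆ {u | G.Adj v u ∧ s(v, u) ∈ S} := by
        rintro u ⟨hadj, huT⟩
        refine ⟨hadj, ?_⟩
        have := huT v hadj.symm
        rwa [Sym2.eq_swap] at this
      exact hcl v (le_trans hv (Set.ncard_le_ncard hsubset (Set.toFinite _)))
    have hall := hA T hAT hTcl
    intro e he
    induction e using Sym2.ind with
    | _ v w => exact hall v w (G.mem_edgeSet.mp he)
  have hFcard : F.card ≤ r * A.card := by
    calc F.card ≤ ∑ a ∈ A, ((N a).image fun u => s(a, u)).card := Finset.card_biUnion_le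
      _ ≤ ∑ _a ∈ A, r := Finset.sum_le_sum (fun a _ =>
          le_trans Finset.card_image_le (by rw [hNcard a]; exact min_le_left _ _))
      _ = r * A.card := by rw [Finset.sum_const, smul_eq_mul, mul_comm]
  calc mEdge G r ≤ F.card := Nat.sInf_le ⟨F, hFedge, hperc, rfl⟩
    _ ≤ r * A.card := hFcard
    _ = r * mVertex G r := by rw [hAcard]
end

section
/- For every finite simple graph G = (V,E) and every integer r ≥ 0, m(G,r) ≤ m_e(G,r) + |{v ∈ V : deg_G(v) < r}|; that is, the minimum size of a percolating vertex set in the r-neighbour bootstrap process is at most the minimum size of a percolating edge set in the r-bond bootstrap process plus the number of vertices of degree less than r. -/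
open Polynomial

/-- For a finite simple graph `G` and `r ≥ 0`,
`m(G,r) ≤ m_e(G,r) + #{v : deg v < r}`. -/
theorem stmt1 {V : Type*} [Fintype V] (G : SimpleGraph V) (r : ℕ) :
    mVertex G r ≤ mEdge G r + {v : V | (G.neighborSet v).ncard < r}.ncard := by

  classical
  have hne : ∃ n, n ∈ {n | ∃ F : Finset (Sym2 V), ↑F ⊆ G.edgeSet ∧ BondPercolates G r ↑F ∧
      F.card = n} := by
    refine ⟨_, G.edgeSet.toFinite.toFinset, ?_, ?_, rfl⟩
    · intro e he
      simpa using he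
    · intro S hFS _ e he
      exact hFS (by simpa using he)
  obtain ⟨F, hF, hFperc, hFcard⟩ := Nat.sInf_mem hne
  set f : Sym2 V → V := fun e => e.out.1 with hf
  have hfm : ∀ e : Sym2 V, f e ∈ e := fun e => Sym2.out_fst_mem e
  set L : Set V := {v : V | (G.neighborSet v).ncard < r} with hL
  set A : Finset V := L.toFinite.toFinset ∪ F.image f with hA
  have hAperc : NeighPercolates G r ↑A := by
    intro S hAS hSc
    set T : Set (Sym2 V) := {e | ∃ x ∈ e, x ∈ S} with hT
    have hFT : (↑F : Set (Sym2 V)) ⊆ T := by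
      intro e heF
      refine ⟨f e, hfm e, hAS ?_⟩
      simp only [hA, Finset.coe_union, Set.mem_union, Finset.coe_image, Set.mem_image]
      exact Or.inr ⟨e, heF, rfl⟩
    have hTc : BondClosed G r T := by
      intro v hv w hvw
      by_cases hvS : v ∈ S
      · exact ⟨v, Sym2.mem_mk_left v w, hvS⟩
      · have hsub : {u | G.Adj v u ∧ s(v, u) ∈ T} ⊆ {u | G.Adj v u ∧ u ∈ S} := by
          rintro u ⟨hu, x, hx, hxS⟩
          refine ⟨hu, ?_⟩
          rcases Sym2.mem_iff.mp hx with rfl | rfl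
          · exact absurd hxS hvS
          · exact hxS
        have hmono := Set.ncard_le_ncard hsub (Set.toFinite _)
        exact absurd (hSc v (le_trans hv hmono)) hvS
    have hedge := hFperc T hFT hTc
    intro v
    by_cases hLv : (G.neighborSet v).ncard < r
    · refine hAS ?_
      simp only [hA, Finset.coe_union, Set.mem_union, Set.Finite.coe_toFinset]
      exact Or.inl hLv
    · push_neg at hLv
      by_contra hvS
      have hsub : G.neighborSet v ⊆ {u | G.Adj v u ∧ u ∈ S} := by
        intro u hu
        have heT : s(v, u) ∈ T := hedge (G.mem_edgeSet.mpr hu)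
        obtain ⟨x, hx, hxS⟩ := heT
        rcases Sym2.mem_iff.mp hx with rfl | rfl
        · exact absurd hxS hvS
        · exact ⟨hu, hxS⟩
      have hmono := Set.ncard_le_ncard hsub (Set.toFinite _)
      exact hvS (hSc v (le_trans hLv hmono))
  have h1 : mVertex G r ≤ A.card := Nat.sInf_le ⟨A, hAperc, rfl⟩
  have h2 : A.card ≤ F.card + L.ncard := by
    calc A.card ≤ L.toFinite.toFinset.card + (F.image f).card := Finset.card_union_le _ _
      _ ≤ L.ncard + F.card := by
          gcongr
          · exact le_of_eq (Set.ncard_eq_toFinset_card L L.toFinite).symm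
          · exact Finset.card_image_le
      _ = F.card + L.ncard := Nat.add_comm _ _
  calc mVertex G r ≤ A.card := h1
    _ ≤ F.card + L.ncard := h2
    _ = mEdge G r + L.ncard := by rw [hFcard]; rfl
end

section
/- Let G = (V,E) be a finite simple graph, r ≥ 0 an integer, and c : E → ℝ a proper edge colouring of G. Then m_e(G,r) ≥ dim(W^r_{G,c}); that is, the minimum size of a percolating edge set in the r-bond bootstrap process on G is at least the dimension of the vector space W^r_{G,c}. -/
open Polynomial

lemma poly_eq_zero_of_roots {p : ℝ[X]} {r : ℕ} (hd : p.degree < (r : WithBot ℕ))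
    {T : Set ℝ} (hT : r ≤ T.ncard) (h : ∀ x ∈ T, p.eval x = 0) : p = 0 := by
  by_contra hp
  have hnd : p.natDegree < r := (Polynomial.natDegree_lt_iff_degree_lt hp).2 hd
  have hr : 0 < r := Nat.pos_of_ne_zero (by rintro rfl; exact Nat.not_lt_zero _ hnd)
  obtain ⟨t, htT, htc⟩ := Set.exists_subset_card_eq hT
  have htfin : t.Finite := Set.finite_of_ncard_ne_zero (by omega)
  have := Polynomial.eq_zero_of_natDegree_lt_card_of_eval_eq_zero' p htfin.toFinset
    (fun x hx => h x (htT (htfin.mem_toFinset.1 hx)))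
    (by rwa [← Set.ncard_eq_toFinset_card t htfin, htc])
  exact hp this


/-- For a finite simple graph `G`, `r ≥ 0`, and a proper edge colouring `c`,
`m_e(G,r) ≥ dim W^r_{G,c}`. -/
theorem stmt2 {V : Type*} [Fintype V] (G : SimpleGraph V) (r : ℕ) (c : Sym2 V → ℝ)
    (hc : ProperEdgeColouring G c) :
    Module.finrank ℝ (Wspace G c r) ≤ mEdge G r := by
  classical
  -- mEdge is attained
  have hne : {n | ∃ F : Finset (Sym2 V), ↑F ⊆ G.edgeSet ∧ BondPercolates G r ↑F ∧ F.card = n}.Nonempty := by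
    refine ⟨G.edgeFinset.card, G.edgeFinset, ?_, ?_, rfl⟩
    · simp [SimpleGraph.edgeFinset]
    · intro S hFS _ e he
      exact hFS (by simpa [SimpleGraph.mem_edgeFinset] using he)
  obtain ⟨F, hFE, hperc, hcard⟩ := Nat.sInf_mem hne
  rw [mEdge, ← hcard]
  -- restriction map to F
  let L : Wspace G c r →ₗ[ℝ] ({e : Sym2 V // e ∈ F} → ℝ) :=
    { toFun := fun φ e => φ.1 e.1
      map_add' := fun φ ψ => rfl
      map_smul' := fun a φ => rfl }
  have hinj : Function.Injective L := by
    rw [injective_iff_map_eq_zero]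
    intro φ hφ
    obtain ⟨hφ0, p, hdeg, heval⟩ := φ.2
    set S : Set (Sym2 V) := {e | φ.1 e = 0} with hS
    have hFS : (F : Set (Sym2 V)) ⊆ S := by
      intro e he
      have : L φ ⟨e, Finset.mem_coe.1 he⟩ = 0 := by rw [hφ]; rfl
      exact this
    have hclosed : BondClosed G r S := by
      intro v hv w hw
      have hpv : p v = 0 := by
        refine poly_eq_zero_of_roots (hdeg v)
          (T := (fun u => c s(v, u)) '' {u | G.Adj v u ∧ s(v, u) ∈ S}) ?_ ?_
        · rw [Set.ncard_image_of_injOn]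
          · exact hv
          · intro u hu u' hu' hcc
            by_contra hne'
            refine hc s(v, u) (G.mem_edgeSet.2 hu.1) s(v, u')
              (G.mem_edgeSet.2 hu'.1) ?_ ⟨v, Sym2.mem_mk_left _ _, Sym2.mem_mk_left _ _⟩ hcc
            rw [Ne, Sym2.eq_iff]
            rintro (⟨-, rfl⟩ | ⟨rfl, rfl⟩)
            · exact hne' rfl
            · exact G.irrefl hu.1
        · rintro x ⟨u, hu, rfl⟩
          rw [heval v u hu.1]
          exact hu.2
      have : φ.1 s(v, w) = 0 := by rw [← heval v w hw, hpv]; simp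
      exact this
    have hall : G.edgeSet ⊆ S := hperc S hFS hclosed
    ext e
    by_cases he : e ∈ G.edgeSet
    · exact hall he
    · exact hφ0 e he
  calc Module.finrank ℝ (Wspace G c r)
      ≤ Module.finrank ℝ ({e : Sym2 V // e ∈ F} → ℝ) :=
        LinearMap.finrank_le_finrank_of_injective hinj
    _ = F.card := by
        rw [Module.finrank_fintype_fun_eq_card, Fintype.card_coe]
end

section
/- Let G = (V,E) be a finite simple graph, r ≥ 0 an integer, c : E → ℝ a proper edge colouring of G, and let F ⊆ E be a percolating set for the r-bond bootstrap percolation process on G. If φ ∈ W^r_{G,c} satisfies φ(e) = 0 for every e ∈ F, then φ is identically zero on E. -/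
open Polynomial

/-- If `F` percolates in the `r`-bond bootstrap process on `G` and
`φ ∈ W^r_{G,c}` vanishes on `F`, then `φ` vanishes on every edge of `G`. -/
theorem stmt3 {V : Type*} [Fintype V] (G : SimpleGraph V) (r : ℕ) (c : Sym2 V → ℝ)
    (hc : ProperEdgeColouring G c) (F : Set (Sym2 V)) (hF : F ⊆ G.edgeSet)
    (hperc : BondPercolates G r F) (φ : Sym2 V → ℝ) (hφ : φ ∈ Wspace G c r)
    (hzero : ∀ e ∈ F, φ e = 0) :
    ∀ e ∈ G.edgeSet, φ e = 0 := by
  classical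
  obtain ⟨hφ0, p, hp, hpe⟩ := hφ
  intro e he
  refine hperc {e | φ e = 0} hzero ?_ he
  intro v hv w hvw
  -- show p v = 0 using ≥ r roots
  have hTfin : {u | G.Adj v u ∧ s(v, u) ∈ {e | φ e = 0}}.Finite := Set.toFinite _
  set T := hTfin.toFinset with hT
  have hTcard : r ≤ T.card := by
    rw [hT, ← Set.ncard_eq_toFinset_card _ hTfin]; exact hv
  have hinj : ∀ u₁ ∈ T, ∀ u₂ ∈ T, c s(v, u₁) = c s(v, u₂) → u₁ = u₂ := by
    intro u₁ h₁ u₂ h₂ hcc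
    rw [hT, Set.Finite.mem_toFinset] at h₁ h₂
    by_contra hne
    have hedne : s(v, u₁) ≠ s(v, u₂) := by
      intro h
      rw [Sym2.eq_iff] at h
      rcases h with ⟨_, h⟩ | ⟨_, h⟩
      · exact hne h
      · exact G.ne_of_adj h₁.1 h.symm
    exact hc _ (G.mem_edgeSet.mpr h₁.1) _ (G.mem_edgeSet.mpr h₂.1) hedne
      ⟨v, Sym2.mem_mk_left _ _, Sym2.mem_mk_left _ _⟩ hcc
  have hcinj : (T.image (fun u => c s(v, u))).card = T.card :=
    Finset.card_image_of_injOn fun u₁ h₁ u₂ h₂ h => hinj u₁ h₁ u₂ h₂ h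
  have hpv : p v = 0 := by
    by_cases h0 : p v = 0
    · exact h0
    refine Polynomial.eq_zero_of_natDegree_lt_card_of_eval_eq_zero' (p v)
      (T.image (fun u => c s(v, u))) ?_ ?_
    · intro x hx
      obtain ⟨u, hu, rfl⟩ := Finset.mem_image.mp hx
      rw [hT, Set.Finite.mem_toFinset] at hu
      rw [hpe v u hu.1]
      exact hu.2
    · rw [hcinj]
      have := hp v
      rw [Polynomial.degree_eq_natDegree h0, Nat.cast_lt] at this
      exact lt_of_lt_of_le this hTcard
  have := hpe v w hvw
  rw [hpv] at this
  simpa using this.symm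
end

section
/- Let r ≥ 1 and k ≥ 3 be integers and let G = (V,E) be a finite simple graph. Then m_e(G □ C_k, r) ≤ m_e(G,r) + (k−2)·m_e(G,r−1) + m_e(G,r−2) + d_{r−1}(G) + k·(d_0(G) + d_1(G) + … + d_{r−2}(G)), where the term m_e(G,r−2) is interpreted as 0 when r = 1 and the sum d_0 + … + d_{r−2} is empty when r = 1. -/
open Polynomial

/-- `degCount G t` is the number of vertices of `G` of degree exactly `t`. -/
noncomputable def degCount {V : Type*} (G : SimpleGraph V) (t : ℕ) : ℕ :=
  {v : V | (G.neighborSet v).ncard = t}.ncard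

open SimpleGraph

lemma exists_mEdge {V : Type*} [Fintype V] (G : SimpleGraph V) (r : ℕ) :
    ∃ F : Finset (Sym2 V), ↑F ⊆ G.edgeSet ∧ BondPercolates G r ↑F ∧ F.card = mEdge G r := by
  have hne : {n | ∃ F : Finset (Sym2 V), ↑F ⊆ G.edgeSet ∧ BondPercolates G r ↑F ∧
      F.card = n}.Nonempty := by
    refine ⟨(Set.toFinite G.edgeSet).toFinset.card, (Set.toFinite G.edgeSet).toFinset, ?_, ?_, rfl⟩
    · simp
    · intro S hFS _
      simpa using hFS
  exact Nat.sInf_mem hne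

lemma infect_vertex {V : Type*} [Fintype V] {k r : ℕ} {G : SimpleGraph V}
    {S : Set (Sym2 (V × Fin k))} (hS : BondClosed (G.boxProd (cycleGraph k)) r S)
    (v : V) (i : Fin k) (A : Set V) (hA : ∀ u ∈ A, G.Adj v u ∧ s((v,i),(u,i)) ∈ S)
    (J : Set (Fin k)) (hJ : ∀ j ∈ J, (cycleGraph k).Adj i j ∧ s((v,i),(v,j)) ∈ S)
    (hcard : r ≤ A.ncard + J.ncard) :
    ∀ x, (G.boxProd (cycleGraph k)).Adj (v,i) x → s((v,i),x) ∈ S := by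
  refine hS (v, i) ?_
  set N := {x : V × Fin k | (G.boxProd (cycleGraph k)).Adj (v,i) x ∧ s((v,i), x) ∈ S} with hN
  have h1 : (fun u => (u, i)) '' A ⊆ N := by
    rintro _ ⟨u, hu, rfl⟩
    obtain ⟨h, h'⟩ := hA u hu
    exact ⟨SimpleGraph.boxProd_adj.2 (Or.inl ⟨h, rfl⟩), h'⟩
  have h2 : (fun j => (v, j)) '' J ⊆ N := by
    rintro _ ⟨j, hj, rfl⟩
    obtain ⟨h, h'⟩ := hJ j hj
    exact ⟨SimpleGraph.boxProd_adj.2 (Or.inr ⟨h, rfl⟩), h'⟩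
  have hdisj : Disjoint ((fun u => (u,i)) '' A) ((fun j => (v,j)) '' J) := by
    rw [Set.disjoint_left]
    rintro _ ⟨u, hu, rfl⟩ ⟨j, hj, hEq⟩
    have hji : j = i := congrArg Prod.snd hEq
    exact (hJ j hj).1.ne' hji
  have inj1 : Function.Injective (fun u : V => (u, i)) := fun a b h => by
    simpa [Prod.ext_iff] using h
  have inj2 : Function.Injective (fun j : Fin k => (v, j)) := fun a b h => by
    simpa [Prod.ext_iff] using h
  calc r ≤ A.ncard + J.ncard := hcard
    _ = ((fun u => (u,i)) '' A).ncard + ((fun j => (v,j)) '' J).ncard := by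
        rw [Set.ncard_image_of_injective _ inj1, Set.ncard_image_of_injective _ inj2]
    _ = (((fun u => (u,i)) '' A) ∪ ((fun j => (v,j)) '' J)).ncard :=
        (Set.ncard_union_eq hdisj (Set.toFinite _) (Set.toFinite _)).symm
    _ ≤ N.ncard := Set.ncard_le_ncard (Set.union_subset h1 h2) (Set.toFinite _)

lemma layer_perc {V : Type*} [Fintype V] {k r : ℕ} {G : SimpleGraph V}
    {S : Set (Sym2 (V × Fin k))} (hS : BondClosed (G.boxProd (cycleGraph k)) r S)
    (i : Fin k) (r' : ℕ) (F' : Finset (Sym2 V))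
    (hFp : BondPercolates G r' ↑F')
    (hFS : ∀ e ∈ F', Sym2.map (·, i) e ∈ S)
    (J : V → Set (Fin k)) (hJ : ∀ v, ∀ j ∈ J v, (cycleGraph k).Adj i j ∧ s((v,i),(v,j)) ∈ S)
    (hcount : ∀ v, r ≤ r' + (J v).ncard) :
    ∀ v w, G.Adj v w → s((v,i),(w,i)) ∈ S := by
  set T : Set (Sym2 V) := {e | e ∈ G.edgeSet → Sym2.map (·, i) e ∈ S} with hTdef
  have hsub : ↑F' ⊆ T := fun e he _ => hFS e he
  have hT : BondClosed G r' T := by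
    intro v hv w hvw
    intro _
    set A := {u | G.Adj v u ∧ s(v, u) ∈ T} with hAdef
    have hA : ∀ u ∈ A, G.Adj v u ∧ s((v,i),(u,i)) ∈ S := by
      rintro u ⟨hu1, hu2⟩
      refine ⟨hu1, ?_⟩
      have := hu2 (G.mem_edgeSet.2 hu1)
      simpa [Sym2.map_pair_eq] using this
    have hc : r ≤ A.ncard + (J v).ncard := le_trans (hcount v) (by
      have := hv
      omega)
    have hall := infect_vertex hS v i A hA (J v) (hJ v) hc
    have hres := hall (w, i) (SimpleGraph.boxProd_adj.2 (Or.inl ⟨hvw, rfl⟩))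
    simpa [Sym2.map_pair_eq] using hres
  have hfin := hFp T hsub hT
  intro v w hvw
  have := hfin (G.mem_edgeSet.2 hvw) (G.mem_edgeSet.2 hvw)
  simpa [Sym2.map_pair_eq] using this

lemma full_perc {V : Type*} [Fintype V] {k r : ℕ} [NeZero k] (hk : 3 ≤ k) (hr : 1 ≤ r)
    {G : SimpleGraph V} {S : Set (Sym2 (V × Fin k))}
    (hS : BondClosed (G.boxProd (cycleGraph k)) r S)
    (Fr F1 F2 : Finset (Sym2 V))
    (hFrP : BondPercolates G r ↑Fr)
    (hF1P : BondPercolates G (r - 1) ↑F1)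
    (hF2P : BondPercolates G (r - 2) ↑F2)
    (hFrS : ∀ e ∈ Fr, Sym2.map (·, (⟨0, by omega⟩ : Fin k)) e ∈ S)
    (hF1S : ∀ i : Fin k, i.val ≠ 0 → i.val ≠ k - 1 → ∀ e ∈ F1, Sym2.map (·, i) e ∈ S)
    (hF2S : ∀ e ∈ F2, Sym2.map (·, (⟨k - 1, by omega⟩ : Fin k)) e ∈ S)
    (hDS : ∀ v : V, (G.neighborSet v).ncard = r - 1 →
      s((v, (⟨0, by omega⟩ : Fin k)), (v, (⟨0, by omega⟩ : Fin k) + 1)) ∈ S)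
    (hlow : ∀ v : V, (G.neighborSet v).ncard < r - 1 → ∀ i : Fin k,
      s((v, i), (v, i + 1)) ∈ S) :
    (G.boxProd (cycleGraph k)).edgeSet ⊆ S := by
  have hzlt : 0 < k := by omega
  have hlstlt : k - 1 < k := by omega
  have h1v : (1 : Fin k).val = 1 := by
    rw [Fin.val_one']; exact Nat.mod_eq_of_lt (by omega)
  have hsuccval : ∀ i : Fin k, (i + 1).val = (i.val + 1) % k := by
    intro i; rw [Fin.add_def, h1v]
  have hadjsucc : ∀ i : Fin k, (cycleGraph k).Adj i (i + 1) := by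
    intro i
    rw [cycleGraph_adj']
    right
    rw [add_sub_cancel_left, h1v]
  have hadjcases : ∀ i j : Fin k, (cycleGraph k).Adj i j → j = i + 1 ∨ i = j + 1 := by
    intro i j h
    rw [cycleGraph_adj'] at h
    rcases h with h | h
    · right
      have h2 : i - j = 1 := Fin.ext (by rw [h1v]; exact h)
      rw [sub_eq_iff_eq_add] at h2
      rw [h2, add_comm]
    · left
      have h2 : j - i = 1 := Fin.ext (by rw [h1v]; exact h)
      rw [sub_eq_iff_eq_add] at h2
      rw [h2, add_comm]
  have hlastsucc : (⟨k - 1, hlstlt⟩ : Fin k) + 1 = ⟨0, hzlt⟩ := by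
    apply Fin.ext
    rw [hsuccval]
    show (k - 1 + 1) % k = 0
    rw [Nat.sub_add_cancel (by omega), Nat.mod_self]
  have hadjlastz : (cycleGraph k).Adj ⟨k - 1, hlstlt⟩ ⟨0, hzlt⟩ := by
    have := hadjsucc ⟨k - 1, hlstlt⟩
    rwa [hlastsucc] at this
  -- layer 0
  have hL0 : ∀ v w, G.Adj v w → s((v, (⟨0, hzlt⟩ : Fin k)), (w, (⟨0, hzlt⟩ : Fin k))) ∈ S :=
    layer_perc hS ⟨0, hzlt⟩ r Fr hFrP hFrS (fun _ => ∅) (by simp)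
      (fun v => by rw [Set.ncard_empty]; omega)
  -- cycle edges at layer 0
  have hC0 : ∀ v : V, s((v, (⟨0, hzlt⟩ : Fin k)), (v, (⟨0, hzlt⟩ : Fin k) + 1)) ∈ S ∧
      s((v, (⟨0, hzlt⟩ : Fin k)), (v, (⟨k - 1, hlstlt⟩ : Fin k))) ∈ S := by
    intro v
    rcases lt_trichotomy ((G.neighborSet v).ncard) (r - 1) with h | h | h
    · refine ⟨hlow v h _, ?_⟩
      have := hlow v h ⟨k - 1, hlstlt⟩
      rw [hlastsucc] at this
      rw [Sym2.eq_swap]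
      exact this
    · have hd := hDS v h
      have hall := infect_vertex hS v ⟨0, hzlt⟩ (G.neighborSet v)
        (fun u hu => ⟨hu, hL0 v u hu⟩) {(⟨0, hzlt⟩ : Fin k) + 1}
        (fun j hj => by
          rw [Set.mem_singleton_iff] at hj
          subst hj
          exact ⟨hadjsucc _, hd⟩)
        (by rw [Set.ncard_singleton, h]; omega)
      exact ⟨hd, hall (v, ⟨k - 1, hlstlt⟩)
        (SimpleGraph.boxProd_adj.2 (Or.inr ⟨hadjlastz.symm, rfl⟩))⟩
    · have hall := infect_vertex hS v ⟨0, hzlt⟩ (G.neighborSet v)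
        (fun u hu => ⟨hu, hL0 v u hu⟩) ∅ (by simp)
        (by rw [Set.ncard_empty]; omega)
      exact ⟨hall (v, (⟨0, hzlt⟩ : Fin k) + 1)
          (SimpleGraph.boxProd_adj.2 (Or.inr ⟨hadjsucc _, rfl⟩)),
        hall (v, ⟨k - 1, hlstlt⟩)
          (SimpleGraph.boxProd_adj.2 (Or.inr ⟨hadjlastz.symm, rfl⟩))⟩
  -- induction over layers 0..k-2
  have key : ∀ n : ℕ, ∀ hn : n < k - 1,
      (∀ v w, G.Adj v w →
        s((v, (⟨n, by omega⟩ : Fin k)), (w, (⟨n, by omega⟩ : Fin k))) ∈ S) ∧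
      (∀ v, s((v, (⟨n, by omega⟩ : Fin k)), (v, (⟨n, by omega⟩ : Fin k) + 1)) ∈ S) := by
    intro n
    induction n with
    | zero =>
      intro hn
      exact ⟨fun v w h => hL0 v w h, fun v => (hC0 v).1⟩
    | succ m ih =>
      intro hn
      have ihh := ih (by omega)
      have hmsucc : (⟨m, by omega⟩ : Fin k) + 1 = (⟨m + 1, by omega⟩ : Fin k) := by
        apply Fin.ext
        rw [hsuccval]
        show (m + 1) % k = m + 1
        exact Nat.mod_eq_of_lt (by omega)
      have hdown : ∀ v,
          s((v, (⟨m + 1, by omega⟩ : Fin k)), (v, (⟨m, by omega⟩ : Fin k))) ∈ S := by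
        intro v
        rw [Sym2.eq_swap]
        have := ihh.2 v
        rwa [hmsucc] at this
      have hadjdown : (cycleGraph k).Adj (⟨m + 1, by omega⟩ : Fin k) (⟨m, by omega⟩ : Fin k) := by
        have := hadjsucc (⟨m, by omega⟩ : Fin k)
        rw [hmsucc] at this
        exact this.symm
      have hlayer : ∀ v w, G.Adj v w →
          s((v, (⟨m + 1, by omega⟩ : Fin k)), (w, (⟨m + 1, by omega⟩ : Fin k))) ∈ S :=
        layer_perc hS _ (r - 1) F1 hF1P
          (hF1S _ (by show m + 1 ≠ 0; omega) (by show m + 1 ≠ k - 1; omega))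
          (fun v => {(⟨m, by omega⟩ : Fin k)})
          (fun v j hj => by
            rw [Set.mem_singleton_iff] at hj
            subst hj
            exact ⟨hadjdown, hdown v⟩)
          (fun v => by rw [Set.ncard_singleton]; omega)
      refine ⟨hlayer, ?_⟩
      intro v
      rcases lt_or_ge ((G.neighborSet v).ncard) (r - 1) with h | h
      · exact hlow v h _
      · have hall := infect_vertex hS v (⟨m + 1, by omega⟩ : Fin k) (G.neighborSet v)
          (fun u hu => ⟨hu, hlayer v u hu⟩) {(⟨m, by omega⟩ : Fin k)}
          (fun j hj => by
            rw [Set.mem_singleton_iff] at hj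
            subst hj
            exact ⟨hadjdown, hdown v⟩)
          (by rw [Set.ncard_singleton]; omega)
        exact hall (v, (⟨m + 1, by omega⟩ : Fin k) + 1)
          (SimpleGraph.boxProd_adj.2 (Or.inr ⟨hadjsucc _, rfl⟩))
  -- last layer
  have hk2succ : (⟨k - 2, by omega⟩ : Fin k) + 1 = (⟨k - 1, hlstlt⟩ : Fin k) := by
    apply Fin.ext
    rw [hsuccval]
    show (k - 2 + 1) % k = k - 1
    rw [Nat.mod_eq_of_lt (by omega)]
    omega
  have hadjlastk2 : (cycleGraph k).Adj ⟨k - 1, hlstlt⟩ (⟨k - 2, by omega⟩ : Fin k) := by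
    have := hadjsucc (⟨k - 2, by omega⟩ : Fin k)
    rw [hk2succ] at this
    exact this.symm
  have hk2edge : ∀ v, s((v, (⟨k - 1, hlstlt⟩ : Fin k)), (v, (⟨k - 2, by omega⟩ : Fin k))) ∈ S := by
    intro v
    rw [Sym2.eq_swap]
    have := (key (k - 2) (by omega)).2 v
    rwa [hk2succ] at this
  have hlastlayer : ∀ v w, G.Adj v w →
      s((v, (⟨k - 1, hlstlt⟩ : Fin k)), (w, (⟨k - 1, hlstlt⟩ : Fin k))) ∈ S :=
    layer_perc hS ⟨k - 1, hlstlt⟩ (r - 2) F2 hF2P hF2S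
      (fun v => {(⟨k - 2, by omega⟩ : Fin k), (⟨0, hzlt⟩ : Fin k)})
      (fun v j hj => by
        rcases Set.mem_insert_iff.1 hj with rfl | hj
        · exact ⟨hadjlastk2, hk2edge v⟩
        · rw [Set.mem_singleton_iff] at hj
          subst hj
          refine ⟨hadjlastz, ?_⟩
          rw [Sym2.eq_swap]
          exact (hC0 v).2)
      (fun v => by
        rw [Set.ncard_pair (by
          simp only [ne_eq, Fin.mk.injEq]
          omega)]
        omega)
  -- every edge of the product is in S
  have hcyc : ∀ (a : V) (i : Fin k), s((a, i), (a, i + 1)) ∈ S := by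
    intro a i
    by_cases hi : i.val < k - 1
    · have := (key i.val hi).2 a
      have heta : (⟨i.val, by omega⟩ : Fin k) = i := Fin.ext rfl
      rwa [heta] at this
    · have hlast : i = ⟨k - 1, hlstlt⟩ := by
        apply Fin.ext
        show i.val = k - 1
        omega
      rw [hlast, hlastsucc, Sym2.eq_swap]
      exact (hC0 a).2
  intro e he
  induction e using Sym2.ind with
  | _ x y =>
    obtain ⟨a, i⟩ := x
    obtain ⟨b, j⟩ := y
    rw [SimpleGraph.mem_edgeSet, SimpleGraph.boxProd_adj] at he
    rcases he with ⟨hab, hEq⟩ | ⟨hij, hEq⟩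
    · simp only [] at hEq
      subst hEq
      by_cases hi : i.val < k - 1
      · have := (key i.val hi).1 a b hab
        have heta : (⟨i.val, by omega⟩ : Fin k) = i := Fin.ext rfl
        rwa [heta] at this
      · have hlast : i = ⟨k - 1, hlstlt⟩ := by
          apply Fin.ext
          show i.val = k - 1
          omega
        rw [hlast]
        exact hlastlayer a b hab
    · simp only [] at hEq
      subst hEq
      rcases hadjcases i j hij with h | h
      · rw [h]
        exact hcyc a i
      · rw [Sym2.eq_swap, h]
        exact hcyc a j

/-- Upper bound for `m_e(G □ C_k, r)`. Here `r - 2 = 0` when `r = 1`,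
and `mEdge G 0 = 0`, matching the convention that the corresponding term vanishes;
the sum over `t ∈ range (r-1)` is `d_0 + ⋯ + d_{r-2}` and is empty when `r = 1`. -/
theorem stmt5 {V : Type*} [Fintype V] (G : SimpleGraph V) (r k : ℕ) (hr : 1 ≤ r)
    (hk : 3 ≤ k) :
    mEdge (G.boxProd (SimpleGraph.cycleGraph k)) r ≤
      mEdge G r + (k - 2) * mEdge G (r - 1) + mEdge G (r - 2) + degCount G (r - 1)
        + k * ∑ t ∈ Finset.range (r - 1), degCount G t := by

  classical
  haveI : NeZero k := ⟨by omega⟩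
  have hzlt : 0 < k := by omega
  have hlstlt : k - 1 < k := by omega
  have h1v : (1 : Fin k).val = 1 := by
    rw [Fin.val_one']; exact Nat.mod_eq_of_lt (by omega)
  have hadjsucc : ∀ i : Fin k, (cycleGraph k).Adj i (i + 1) := by
    intro i
    rw [cycleGraph_adj']
    right
    rw [add_sub_cancel_left, h1v]
  obtain ⟨Fr, hFrE, hFrP, hFrC⟩ := exists_mEdge G r
  obtain ⟨F1, hF1E, hF1P, hF1C⟩ := exists_mEdge G (r - 1)
  obtain ⟨F2, hF2E, hF2P, hF2C⟩ := exists_mEdge G (r - 2)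
  set Dset : Finset V := Finset.univ.filter (fun v => (G.neighborSet v).ncard = r - 1)
    with hDdef
  set Lset : Finset V := Finset.univ.filter (fun v => (G.neighborSet v).ncard < r - 1)
    with hLdef
  set Fmid : Finset (Fin k) :=
    (Finset.univ.erase ⟨0, hzlt⟩).erase ⟨k - 1, hlstlt⟩ with hFmiddef
  set FF : Finset (Sym2 (V × Fin k)) :=
    Fr.image (Sym2.map (·, (⟨0, hzlt⟩ : Fin k))) ∪
    Fmid.biUnion (fun i => F1.image (Sym2.map (·, i))) ∪
    F2.image (Sym2.map (·, (⟨k - 1, hlstlt⟩ : Fin k))) ∪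
    Dset.image (fun v => s((v, (⟨0, hzlt⟩ : Fin k)), (v, (⟨0, hzlt⟩ : Fin k) + 1))) ∪
    (Lset ×ˢ (Finset.univ : Finset (Fin k))).image (fun p => s((p.1, p.2), (p.1, p.2 + 1)))
    with hFFdef
  -- FF consists of edges
  have hlift : ∀ (i : Fin k), ∀ e ∈ G.edgeSet,
      Sym2.map (·, i) e ∈ (G.boxProd (cycleGraph k)).edgeSet := by
    intro i e
    induction e using Sym2.ind with
    | _ a b =>
      intro he
      rw [Sym2.map_pair_eq]
      exact (G.boxProd (cycleGraph k)).mem_edgeSet.2 (SimpleGraph.boxProd_adj.2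
        (Or.inl ⟨G.mem_edgeSet.1 he, rfl⟩))
  have hcycE : ∀ (v : V) (i : Fin k),
      s((v, i), (v, i + 1)) ∈ (G.boxProd (cycleGraph k)).edgeSet :=
    fun v i => (G.boxProd (cycleGraph k)).mem_edgeSet.2
      (SimpleGraph.boxProd_adj.2 (Or.inr ⟨hadjsucc i, rfl⟩))
  have hsubE : ↑FF ⊆ (G.boxProd (cycleGraph k)).edgeSet := by
    intro e he
    rw [Finset.mem_coe, hFFdef] at he
    simp only [Finset.mem_union, Finset.mem_image, Finset.mem_biUnion, Finset.mem_product] at he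
    rcases he with ((((⟨a, ha, rfl⟩ | ⟨i, _, a, ha, rfl⟩) | ⟨a, ha, rfl⟩) | ⟨v, _, rfl⟩) |
      ⟨⟨v, i⟩, _, rfl⟩)
    · exact hlift _ a (hFrE ha)
    · exact hlift i a (hF1E ha)
    · exact hlift _ a (hF2E ha)
    · exact hcycE v _
    · exact hcycE v i
  -- percolation
  have hperc : BondPercolates (G.boxProd (cycleGraph k)) r ↑FF := by
    intro S hFS hS
    refine full_perc hk hr hS Fr F1 F2 hFrP hF1P hF2P ?_ ?_ ?_ ?_ ?_
    · intro e he
      apply hFS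
      rw [Finset.mem_coe, hFFdef]
      simp only [Finset.mem_union]
      exact Or.inl (Or.inl (Or.inl (Or.inl (Finset.mem_image_of_mem _ he))))
    · intro i h0 h1 e he
      apply hFS
      rw [Finset.mem_coe, hFFdef]
      simp only [Finset.mem_union, Finset.mem_biUnion]
      refine Or.inl (Or.inl (Or.inl (Or.inr ⟨i, ?_, Finset.mem_image_of_mem _ he⟩)))
      rw [hFmiddef, Finset.mem_erase, Finset.mem_erase]
      exact ⟨fun hEq => h1 (by rw [hEq]), fun hEq => h0 (by rw [hEq]), Finset.mem_univ _⟩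
    · intro e he
      apply hFS
      rw [Finset.mem_coe, hFFdef]
      simp only [Finset.mem_union]
      exact Or.inl (Or.inl (Or.inr (Finset.mem_image_of_mem _ he)))
    · intro v hv
      apply hFS
      rw [Finset.mem_coe, hFFdef]
      simp only [Finset.mem_union]
      refine Or.inl (Or.inr (Finset.mem_image_of_mem _ ?_))
      rw [hDdef, Finset.mem_filter]
      exact ⟨Finset.mem_univ _, hv⟩
    · intro v hv i
      apply hFS
      rw [Finset.mem_coe, hFFdef]
      simp only [Finset.mem_union]
      refine Or.inr ?_
      refine Finset.mem_image.2 ⟨(v, i), ?_, rfl⟩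
      rw [Finset.mem_product]
      refine ⟨?_, Finset.mem_univ _⟩
      rw [hLdef, Finset.mem_filter]
      exact ⟨Finset.mem_univ _, hv⟩
  -- cardinality bound
  have hdeg : ∀ t : ℕ, (Finset.univ.filter (fun v => (G.neighborSet v).ncard = t)).card
      = degCount G t := by
    intro t
    have hs : {v : V | (G.neighborSet v).ncard = t}
        = ↑(Finset.univ.filter (fun v => (G.neighborSet v).ncard = t)) := by
      ext v; simp
    rw [degCount, hs, Set.ncard_coe_finset]
  have hFmidcard : Fmid.card = k - 2 := by
    rw [hFmiddef, Finset.card_erase_of_mem, Finset.card_erase_of_mem, Finset.card_univ,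
      Fintype.card_fin]
    · omega
    · exact Finset.mem_univ _
    · rw [Finset.mem_erase]
      refine ⟨?_, Finset.mem_univ _⟩
      simp only [ne_eq, Fin.mk.injEq]
      omega
  have hc1 : (Fr.image (Sym2.map (·, (⟨0, hzlt⟩ : Fin k)))).card ≤ mEdge G r := by
    rw [← hFrC]; exact Finset.card_image_le
  have hc2 : (Fmid.biUnion fun i => F1.image (Sym2.map (·, i))).card
      ≤ (k - 2) * mEdge G (r - 1) := by
    calc (Fmid.biUnion fun i => F1.image (Sym2.map (·, i))).card
        ≤ ∑ i ∈ Fmid, (F1.image (Sym2.map (·, i))).card := Finset.card_biUnion_le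
      _ ≤ ∑ _i ∈ Fmid, mEdge G (r - 1) :=
          Finset.sum_le_sum (fun i _ => by rw [← hF1C]; exact Finset.card_image_le)
      _ = (k - 2) * mEdge G (r - 1) := by
          rw [Finset.sum_const, smul_eq_mul, hFmidcard]
  have hc3 : (F2.image (Sym2.map (·, (⟨k - 1, hlstlt⟩ : Fin k)))).card ≤ mEdge G (r - 2) := by
    rw [← hF2C]; exact Finset.card_image_le
  have hc4 : (Dset.image (fun v =>
      s((v, (⟨0, hzlt⟩ : Fin k)), (v, (⟨0, hzlt⟩ : Fin k) + 1)))).card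
      ≤ degCount G (r - 1) := by
    refine le_trans Finset.card_image_le ?_
    rw [hDdef, hdeg]
  have hLcard : Lset.card = ∑ t ∈ Finset.range (r - 1), degCount G t := by
    have hsplit : Lset = (Finset.range (r - 1)).biUnion
        (fun t => Finset.univ.filter (fun v => (G.neighborSet v).ncard = t)) := by
      ext v
      rw [hLdef]
      simp only [Finset.mem_filter, Finset.mem_univ, true_and, Finset.mem_biUnion,
        Finset.mem_range]
      constructor
      · intro h; exact ⟨_, h, rfl⟩
      · rintro ⟨t, ht, h⟩; omega
    rw [hsplit, Finset.card_biUnion]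
    · exact Finset.sum_congr rfl (fun t _ => hdeg t)
    · intro x _ y _ hxy
      rw [Function.onFun, Finset.disjoint_left]
      intro v hv hv'
      rw [Finset.mem_filter] at hv hv'
      exact hxy (hv.2.symm.trans hv'.2)
  have hc5 : (((Lset ×ˢ (Finset.univ : Finset (Fin k))).image
      (fun p => s((p.1, p.2), (p.1, p.2 + 1))))).card
      ≤ k * ∑ t ∈ Finset.range (r - 1), degCount G t := by
    refine le_trans Finset.card_image_le ?_
    rw [Finset.card_product, Finset.card_univ, Fintype.card_fin, hLcard, Nat.mul_comm]
  have hFFcard : FF.card ≤ mEdge G r + (k - 2) * mEdge G (r - 1) + mEdge G (r - 2)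
      + degCount G (r - 1) + k * ∑ t ∈ Finset.range (r - 1), degCount G t := by
    rw [hFFdef]
    refine le_trans (Finset.card_union_le _ _) ?_
    refine Nat.add_le_add ?_ hc5
    refine le_trans (Finset.card_union_le _ _) ?_
    refine Nat.add_le_add ?_ hc4
    refine le_trans (Finset.card_union_le _ _) ?_
    refine Nat.add_le_add ?_ hc3
    refine le_trans (Finset.card_union_le _ _) ?_
    exact Nat.add_le_add hc1 hc2
  exact le_trans (Nat.sInf_le ⟨FF, hsubE, hperc, rfl⟩) hFFcard
end

section
/- Let d > r ≥ 1 be integers. Then m_e(Q_d, r) = m_e(Q_{d−1}, r) + m_e(Q_{d−1}, r−1). -/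
open Polynomial

/-- The `d`-dimensional hypercube `Q_d`: vertices are vectors in `{0,1}^d` and two vertices are
adjacent iff they differ in exactly one coordinate. -/
def hypercube (d : ℕ) : SimpleGraph (Fin d → Bool) where
  Adj x y := ∃! i : Fin d, x i ≠ y i
  symm := by
    constructor
    rintro x y ⟨i, hi, hu⟩
    exact ⟨i, hi.symm, fun j hj => hu j hj.symm⟩
  loopless := by
    constructor
    rintro x ⟨i, hi, -⟩
    exact hi rfl


namespace Stmt12Aux

open scoped symmDiff

/-- the target value `m_e(Q_d, r)` -/
def fval (d r : ℕ) : ℕ := ∑ k ∈ Finset.range r, d.choose k * (r - k)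

lemma fval_zero (d : ℕ) : fval d 0 = 0 := by simp [fval]

lemma fval_succ (d r : ℕ) (hr : 1 ≤ r) : fval (d + 1) r = fval d r + fval d (r - 1) := by
  obtain ⟨s, rfl⟩ : ∃ s, r = s + 1 := ⟨r - 1, (Nat.succ_pred_eq_of_pos hr).symm⟩
  simp only [fval, Nat.add_sub_cancel]
  rw [Finset.sum_range_succ' (fun k => (d+1).choose k * (s + 1 - k)),
    Finset.sum_range_succ' (fun k => d.choose k * (s + 1 - k))]
  simp only [Nat.choose_zero_right, Nat.choose_succ_succ, one_mul]
  have : ∀ k, (d.choose k + d.choose (k+1)) * (s + 1 - (k+1))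
      = d.choose k * (s - k) + d.choose (k+1) * (s + 1 - (k+1)) := by
    intro k
    rw [Nat.add_mul]
    congr 2
    omega
  rw [Finset.sum_congr rfl (fun k _ => this k), Finset.sum_add_distrib]
  ring

lemma fval_self (d : ℕ) (hd : 1 ≤ d) : fval d d = d * 2 ^ (d - 1) := by
  have h1 : fval d d = ∑ k ∈ Finset.range (d + 1), d.choose k * (d - k) := by
    rw [Finset.sum_range_succ]
    simp [fval]
  rw [h1, ← Finset.sum_range_reflect]
  have h2 : ∀ j ∈ Finset.range (d + 1), d.choose (d + 1 - 1 - j) * (d - (d + 1 - 1 - j))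
      = j * d.choose j := by
    intro j hj
    rw [Finset.mem_range] at hj
    rw [Nat.add_sub_cancel, Nat.choose_symm (by omega)]
    have : d - (d - j) = j := by omega
    rw [this, Nat.mul_comm]
  rw [Finset.sum_congr rfl h2, Finset.sum_range_succ' (fun j => j * d.choose j)]
  simp only [Nat.zero_mul, Nat.add_zero]
  have h3 : ∀ j, (j + 1) * d.choose (j + 1) = d * (d - 1).choose j := by
    intro j
    have := Nat.add_one_mul_choose_eq (d - 1) j
    rw [Nat.sub_add_cancel hd] at this
    rw [Nat.mul_comm (j + 1)]
    omega
  rw [Finset.sum_congr rfl (fun j _ => h3 j), ← Finset.mul_sum]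
  congr 1
  have := Nat.sum_range_choose (d - 1)
  rw [Nat.sub_add_cancel hd] at this
  exact this

/-! ### Hypercube basics -/

variable {d : ℕ}

def flip (i : Fin d) (v : Fin d → Bool) : Fin d → Bool := Function.update v i (!(v i))

@[simp] lemma flip_self (i : Fin d) (v : Fin d → Bool) : flip i v i = !(v i) := by
  simp [flip]

lemma flip_ne (i j : Fin d) (v : Fin d → Bool) (h : j ≠ i) : flip i v j = v j := by
  simp [flip, Function.update_of_ne h]

lemma adj_iff {v w : Fin d → Bool} : (hypercube d).Adj v w ↔ ∃ i, w = flip i v := by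
  constructor
  · rintro ⟨i, hi, hu⟩
    refine ⟨i, funext fun j => ?_⟩
    rcases eq_or_ne j i with rfl | hj
    · have : v j ≠ w j := hi
      simp only [flip_self]
      revert this
      cases v j <;> cases w j <;> simp
    · rw [flip_ne i j v hj]
      by_contra h
      exact hj (hu j (fun hvw => h hvw.symm))
  · rintro ⟨i, rfl⟩
    refine ⟨i, by simp, fun j hj => ?_⟩
    by_contra h
    exact hj (flip_ne i j v h).symm

lemma adj_flip (i : Fin d) (v : Fin d → Bool) : (hypercube d).Adj v (flip i v) :=
  adj_iff.2 ⟨i, rfl⟩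

lemma flip_injective (v : Fin d → Bool) : Function.Injective (fun i => flip i v) := by
  intro i j h
  by_contra hij
  have h1 : flip i v i = flip j v i := congrFun h i
  rw [flip_self, flip_ne j i v hij] at h1
  cases v i <;> simp_all

lemma neighborSet_eq (v : Fin d → Bool) :
    {u | (hypercube d).Adj v u} = Set.range (fun i => flip i v) := by
  ext u; simp [adj_iff, Set.mem_setOf_eq, eq_comm]

lemma ncard_neighborSet (v : Fin d → Bool) : {u | (hypercube d).Adj v u}.ncard = d := by
  rw [neighborSet_eq, ← Set.image_univ, Set.ncard_image_of_injective _ (flip_injective v),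
    Set.ncard_univ]
  simp [Nat.card_eq_fintype_card]

variable {V : Type*} (G : SimpleGraph V) (r : ℕ)

lemma mEdge_le (F : Finset (Sym2 V)) (h1 : ↑F ⊆ G.edgeSet) (h2 : BondPercolates G r ↑F) :
    mEdge G r ≤ F.card :=
  Nat.sInf_le ⟨F, h1, h2, rfl⟩

lemma mEdge_set_nonempty [Fintype V] :
    {n | ∃ F : Finset (Sym2 V), ↑F ⊆ G.edgeSet ∧ BondPercolates G r ↑F ∧ F.card = n}.Nonempty := by
  refine ⟨_, G.edgeSet.toFinite.toFinset, ?_, ?_, rfl⟩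
  · rw [Set.Finite.coe_toFinset]
  · intro S hS _
    rw [Set.Finite.coe_toFinset] at hS
    exact hS

lemma exists_min_percolating [Fintype V] :
    ∃ F : Finset (Sym2 V), ↑F ⊆ G.edgeSet ∧ BondPercolates G r ↑F ∧ F.card = mEdge G r :=
  Nat.sInf_mem (mEdge_set_nonempty G r)

lemma empty_percolates_zero : BondPercolates G 0 (↑(∅ : Finset (Sym2 V))) := by
  intro S _ hS e he
  induction e using Sym2.ind with
  | _ v w =>
    rw [SimpleGraph.mem_edgeSet] at he
    exact hS v (Nat.zero_le _) w he

lemma mEdge_zero : mEdge G 0 = 0 :=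
  Nat.le_zero.1 (mEdge_le G 0 ∅ (by simp) (empty_percolates_zero G))

variable {m : ℕ}

def emb (b : Bool) (v : Fin m → Bool) : Fin (m + 1) → Bool := Fin.snoc v b

lemma emb_injective (b : Bool) : Function.Injective (emb (m := m) b) := by
  intro v w h
  have := congrArg Fin.init h
  rwa [emb, emb, Fin.init_snoc, Fin.init_snoc] at this

@[simp] lemma emb_last (b : Bool) (v : Fin m → Bool) : emb b v (Fin.last m) = b := by
  simp [emb]

@[simp] lemma emb_castSucc (b : Bool) (v : Fin m → Bool) (j : Fin m) :
    emb b v j.castSucc = v j := by simp [emb]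

lemma adj_emb {v w : Fin m → Bool} (b : Bool) :
    (hypercube (m + 1)).Adj (emb b v) (emb b w) ↔ (hypercube m).Adj v w := by
  constructor
  · rintro ⟨i, hi, hu⟩
    have hne : i ≠ Fin.last m := by
      rintro rfl; simp at hi
    obtain ⟨j, rfl⟩ := Fin.exists_castSucc_eq.2 hne
    refine ⟨j, by simpa using hi, fun j' hj' => ?_⟩
    have : j'.castSucc = j.castSucc := hu j'.castSucc (by simpa using hj')
    exact Fin.castSucc_injective m this
  · rintro ⟨j, hj, hu⟩
    refine ⟨j.castSucc, by simpa using hj, fun i hi => ?_⟩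
    induction i using Fin.lastCases with
    | last => simp at hi
    | cast i =>
      have : i = j := hu i (by simpa using hi)
      rw [this]

lemma adj_cross (v : Fin m → Bool) :
    (hypercube (m + 1)).Adj (emb false v) (emb true v) := by
  refine ⟨Fin.last m, by simp, fun i hi => ?_⟩
  induction i using Fin.lastCases with
  | last => rfl
  | cast i => simp at hi

lemma adj_cases {x y : Fin (m + 1) → Bool} (h : (hypercube (m + 1)).Adj x y) :
    (∃ b v w, (hypercube m).Adj v w ∧ x = emb b v ∧ y = emb b w) ∨
    (∃ v, (x = emb false v ∧ y = emb true v) ∨ (x = emb true v ∧ y = emb false v)) := by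
  obtain ⟨i, hi, hu⟩ := h
  have hx : x = emb (x (Fin.last m)) (Fin.init x) := (Fin.snoc_init_self x).symm
  have hy : y = emb (y (Fin.last m)) (Fin.init y) := (Fin.snoc_init_self y).symm
  by_cases hlast : x (Fin.last m) = y (Fin.last m)
  · left
    have hne : i ≠ Fin.last m := by rintro rfl; exact hi hlast
    obtain ⟨j, rfl⟩ := Fin.exists_castSucc_eq.2 hne
    refine ⟨x (Fin.last m), Fin.init x, Fin.init y, ⟨j, hi, fun j' hj' => ?_⟩, hx, by rw [hlast]; exact hy⟩
    exact Fin.castSucc_injective m (hu j'.castSucc hj')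
  · right
    have hinit : Fin.init x = Fin.init y := by
      funext j
      by_contra hj
      have h1 : j.castSucc = i := hu j.castSucc hj
      have h2 : Fin.last m = i := hu (Fin.last m) hlast
      exact (Fin.castSucc_lt_last j).ne (h1.trans h2.symm)
    refine ⟨Fin.init x, ?_⟩
    rw [hinit] at hx ⊢
    cases hbx : x (Fin.last m) <;> cases hby : y (Fin.last m)
    · rw [hbx] at hx; rw [hby] at hy; exact absurd (hbx.trans hby.symm) hlast
    · rw [hbx] at hx; rw [hby] at hy; exact Or.inl ⟨hx, hy⟩
    · rw [hbx] at hx; rw [hby] at hy; exact Or.inr ⟨hx, hy⟩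
    · rw [hbx] at hx; rw [hby] at hy; exact absurd (hbx.trans hby.symm) hlast

lemma perc_union {r : ℕ} (hr1 : 1 ≤ r) (hrm : r ≤ m) (F0 F1 : Finset (Sym2 (Fin m → Bool)))
    (h0 : BondPercolates (hypercube m) r ↑F0)
    (h1 : BondPercolates (hypercube m) (r - 1) ↑F1) :
    BondPercolates (hypercube (m + 1)) r
      ↑(F0.image (Sym2.map (emb false)) ∪ F1.image (Sym2.map (emb true))) := by
  intro S hsub hcl
  -- copy 0 edges get infected
  have key0 : ∀ e ∈ (hypercube m).edgeSet, Sym2.map (emb false) e ∈ S := by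
    intro e he
    refine h0 (Sym2.map (emb false) ⁻¹' S) ?_ ?_ he
    · intro e' he'
      exact hsub (by
        simp only [Finset.coe_union, Set.mem_union]
        exact Or.inl (by exact_mod_cast Finset.mem_image_of_mem _ he'))
    · intro v hv w hw
      have hsup : emb false '' {u | (hypercube m).Adj v u ∧ s(v, u) ∈ Sym2.map (emb false) ⁻¹' S}
          ⊆ {u' | (hypercube (m+1)).Adj (emb false v) u' ∧ s(emb false v, u') ∈ S} := by
        rintro _ ⟨u, ⟨hu1, hu2⟩, rfl⟩
        refine ⟨(adj_emb false).2 hu1, ?_⟩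
        simpa [Sym2.map_pair_eq] using hu2
      have hcard : r ≤ {u' | (hypercube (m+1)).Adj (emb false v) u' ∧ s(emb false v, u') ∈ S}.ncard := by
        refine le_trans ?_ (Set.ncard_le_ncard hsup (Set.toFinite _))
        rw [Set.ncard_image_of_injective _ (emb_injective false)]
        exact hv
      have := hcl (emb false v) hcard (emb false w) ((adj_emb false).2 hw)
      simpa [Sym2.map_pair_eq] using this
  -- cross edges get infected
  have cross : ∀ v : Fin m → Bool, s(emb false v, emb true v) ∈ S := by
    intro v
    have hsup : emb false '' {u | (hypercube m).Adj v u}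
        ⊆ {u' | (hypercube (m+1)).Adj (emb false v) u' ∧ s(emb false v, u') ∈ S} := by
      rintro _ ⟨u, hu, rfl⟩
      refine ⟨(adj_emb false).2 hu, ?_⟩
      have := key0 s(v, u) (((hypercube m).mem_edgeSet).2 hu)
      simpa [Sym2.map_pair_eq] using this
    have hcard : r ≤ {u' | (hypercube (m+1)).Adj (emb false v) u' ∧ s(emb false v, u') ∈ S}.ncard := by
      refine le_trans ?_ (Set.ncard_le_ncard hsup (Set.toFinite _))
      rw [Set.ncard_image_of_injective _ (emb_injective false), ncard_neighborSet]
      exact hrm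
    exact hcl (emb false v) hcard (emb true v) (adj_cross v)
  -- copy 1 edges get infected
  have key1 : ∀ e ∈ (hypercube m).edgeSet, Sym2.map (emb true) e ∈ S := by
    intro e he
    refine h1 (Sym2.map (emb true) ⁻¹' S) ?_ ?_ he
    · intro e' he'
      exact hsub (by
        simp only [Finset.coe_union, Set.mem_union]
        exact Or.inr (by exact_mod_cast Finset.mem_image_of_mem _ he'))
    · intro v hv w hw
      set A := {u | (hypercube m).Adj v u ∧ s(v, u) ∈ Sym2.map (emb true) ⁻¹' S}
      have hsup : insert (emb false v) (emb true '' A)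
          ⊆ {u' | (hypercube (m+1)).Adj (emb true v) u' ∧ s(emb true v, u') ∈ S} := by
        rintro u' (rfl | ⟨u, ⟨hu1, hu2⟩, rfl⟩)
        · refine ⟨((adj_cross v).symm), ?_⟩
          rw [Sym2.eq_swap]
          exact cross v
        · refine ⟨(adj_emb true).2 hu1, ?_⟩
          simpa [Sym2.map_pair_eq] using hu2
      have hnotmem : emb false v ∉ emb true '' A := by
        rintro ⟨u, -, hu⟩
        have := congrFun hu (Fin.last m)
        simp at this
      have hcard : r ≤ {u' | (hypercube (m+1)).Adj (emb true v) u' ∧ s(emb true v, u') ∈ S}.ncard := by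
        refine le_trans ?_ (Set.ncard_le_ncard hsup (Set.toFinite _))
        rw [Set.ncard_insert_of_notMem hnotmem (Set.toFinite _),
          Set.ncard_image_of_injective _ (emb_injective true)]
        omega
      have := hcl (emb true v) hcard (emb true w) ((adj_emb true).2 hw)
      simpa [Sym2.map_pair_eq] using this
  -- conclude
  intro e he
  induction e using Sym2.ind with
  | _ x y =>
    rw [SimpleGraph.mem_edgeSet] at he
    rcases adj_cases he with ⟨b, v, w, hadj, rfl, rfl⟩ | ⟨v, ⟨rfl, rfl⟩ | ⟨rfl, rfl⟩⟩
    · cases b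
      · simpa [Sym2.map_pair_eq] using key0 s(v, w) (((hypercube m).mem_edgeSet).2 hadj)
      · simpa [Sym2.map_pair_eq] using key1 s(v, w) (((hypercube m).mem_edgeSet).2 hadj)
    · exact cross v
    · rw [Sym2.eq_swap]; exact cross v

lemma mEdge_succ_le {r : ℕ} (hr1 : 1 ≤ r) (hrm : r ≤ m) :
    mEdge (hypercube (m + 1)) r ≤ mEdge (hypercube m) r + mEdge (hypercube m) (r - 1) := by
  obtain ⟨F0, hF0sub, hF0perc, hF0card⟩ := exists_min_percolating (hypercube m) r
  obtain ⟨F1, hF1sub, hF1perc, hF1card⟩ := exists_min_percolating (hypercube m) (r - 1)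
  have hsub : ↑(F0.image (Sym2.map (emb false)) ∪ F1.image (Sym2.map (emb true)))
      ⊆ (hypercube (m + 1)).edgeSet := by
    intro e he
    simp only [Finset.coe_union, Set.mem_union, Finset.coe_image, Set.mem_image,
      Finset.mem_coe] at he
    rcases he with ⟨e', he', rfl⟩ | ⟨e', he', rfl⟩
    · induction e' using Sym2.ind with
      | _ v w =>
        have := hF0sub he'
        rw [SimpleGraph.mem_edgeSet] at this
        simpa [Sym2.map_pair_eq] using (adj_emb false).2 this
    · induction e' using Sym2.ind with
      | _ v w =>
        have := hF1sub he'
        rw [SimpleGraph.mem_edgeSet] at this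
        simpa [Sym2.map_pair_eq] using (adj_emb true).2 this
  calc mEdge (hypercube (m + 1)) r
      ≤ (F0.image (Sym2.map (emb false)) ∪ F1.image (Sym2.map (emb true))).card :=
        mEdge_le _ _ _ hsub (perc_union hr1 hrm F0 F1 hF0perc hF1perc)
    _ ≤ (F0.image (Sym2.map (emb false))).card + (F1.image (Sym2.map (emb true))).card :=
        Finset.card_union_le _ _
    _ ≤ F0.card + F1.card := Nat.add_le_add (Finset.card_image_le) (Finset.card_image_le)
    _ = _ := by rw [hF0card, hF1card]

lemma mEdge_le_card_edges (d r : ℕ) : mEdge (hypercube d) r ≤ d * 2 ^ (d - 1) := by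
  classical
  have hdeg : ∀ v : Fin d → Bool, (hypercube d).degree v = d := by
    intro v
    rw [← SimpleGraph.card_neighborSet_eq_degree]
    have := ncard_neighborSet v
    rwa [Set.ncard_eq_toFinset_card', Set.toFinset_card] at this
  have hsum := SimpleGraph.sum_degrees_eq_twice_card_edges (hypercube d)
  simp only [hdeg, Finset.sum_const, Finset.card_univ, smul_eq_mul] at hsum
  have hcardV : Fintype.card (Fin d → Bool) = 2 ^ d := by
    simp
  rw [hcardV] at hsum
  have hE : (hypercube d).edgeFinset.card = d * 2 ^ (d - 1) := by
    rcases Nat.eq_zero_or_pos d with rfl | hd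
    · omega
    · have h2 : (2:ℕ) ^ d = 2 ^ (d - 1) * 2 := by
        rw [← pow_succ]
        congr 1
        omega
      rw [h2] at hsum
      have h3 : 2 * (hypercube d).edgeFinset.card = 2 * (d * 2 ^ (d - 1)) := by
        rw [← hsum]; ring
      omega
  rw [← hE]
  refine mEdge_le _ _ _ (by simp) ?_
  intro S hS _
  rwa [SimpleGraph.coe_edgeFinset] at hS

lemma mEdge_le_fval_self (d : ℕ) (hd : 1 ≤ d) : mEdge (hypercube d) d ≤ fval d d := by
  rw [fval_self d hd]
  exact mEdge_le_card_edges d d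

/-- The direction colouring of the hypercube. -/
noncomputable def col (d : ℕ) : Sym2 (Fin d → Bool) → ℝ :=
  Sym2.lift ⟨fun v w => ∑ i : Fin d, if v i ≠ w i then (i : ℝ) else 0, by
    intro v w
    refine Finset.sum_congr rfl fun i _ => if_congr ne_comm rfl rfl⟩

lemma col_flip (i : Fin d) (v : Fin d → Bool) : col d s(v, flip i v) = (i : ℝ) := by
  rw [show col d s(v, flip i v) = ∑ j : Fin d, (if v j ≠ flip i v j then (j : ℝ) else 0) from rfl]
  rw [Finset.sum_eq_single i]
  · simp
  · intro j _ hj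
    rw [if_neg]
    simp only [ne_eq, not_not]
    exact (flip_ne i j v hj).symm
  · simp

/-- Fourier characters of the hypercube. -/
def chi (S : Finset (Fin d)) (v : Fin d → Bool) : ℝ := ∏ j ∈ S, (if v j then (-1 : ℝ) else 1)

lemma chi_sq (S : Finset (Fin d)) (v : Fin d → Bool) : chi S v * chi S v = 1 := by
  rw [chi, ← Finset.prod_mul_distrib]
  rw [Finset.prod_congr rfl (fun j _ => ?_), Finset.prod_const_one]
  by_cases h : v j <;> simp [h]

lemma flip_involutive (j : Fin d) : Function.Involutive (flip j) := by
  intro v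
  funext k
  rcases eq_or_ne k j with rfl | hk
  · simp
  · rw [flip_ne j k _ hk, flip_ne j k v hk]

lemma chi_flip_mem {S : Finset (Fin d)} {j : Fin d} (hj : j ∈ S) (v : Fin d → Bool) :
    chi S (flip j v) = -chi S v := by
  rw [chi, chi, ← Finset.mul_prod_erase _ _ hj, ← Finset.mul_prod_erase _ _ hj]
  have h1 : ∏ k ∈ S.erase j, (if flip j v k then (-1:ℝ) else 1)
      = ∏ k ∈ S.erase j, (if v k then (-1:ℝ) else 1) :=
    Finset.prod_congr rfl fun k hk => by rw [flip_ne j k v (Finset.ne_of_mem_erase hk)]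
  rw [h1, flip_self, ← neg_mul]
  congr 1
  by_cases h : v j <;> simp [h]

lemma chi_flip_not_mem {S : Finset (Fin d)} {j : Fin d} (hj : j ∉ S) (v : Fin d → Bool) :
    chi S (flip j v) = chi S v :=
  Finset.prod_congr rfl fun k hk => by
    rw [flip_ne j k v (fun h => hj (h ▸ hk))]

lemma sum_chi_zero {S : Finset (Fin d)} (hS : S.Nonempty) :
    ∑ v : Fin d → Bool, chi S v = 0 := by
  obtain ⟨j, hj⟩ := hS
  have h1 : ∑ v : Fin d → Bool, chi S v = ∑ v : Fin d → Bool, chi S (flip j v) :=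
    (Equiv.sum_comp ((flip_involutive j).toPerm _) (chi S)).symm
  have h2 : ∑ v : Fin d → Bool, chi S (flip j v) = -∑ v : Fin d → Bool, chi S v := by
    rw [← Finset.sum_neg_distrib]
    exact Finset.sum_congr rfl fun v _ => chi_flip_mem hj v
  have := h1.trans h2
  linarith

lemma chi_mul (S T : Finset (Fin d)) (v : Fin d → Bool) :
    chi S v * chi T v = chi (S ∆ T) v := by
  classical
  have hS : chi S v = chi (S \ T) v * chi (S ∩ T) v := by
    rw [chi, chi, chi, ← Finset.prod_union (Finset.disjoint_sdiff_inter S T),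
      Finset.sdiff_union_inter]
  have hT : chi T v = chi (T \ S) v * chi (S ∩ T) v := by
    rw [Finset.inter_comm, chi, chi, chi,
      ← Finset.prod_union (Finset.disjoint_sdiff_inter T S), Finset.sdiff_union_inter]
  have hsymm : chi (S ∆ T) v = chi (S \ T) v * chi (T \ S) v := by
    rw [symmDiff_def, chi, chi, chi]
    rw [show (S \ T ⊔ T \ S : Finset (Fin d)) = (S \ T) ∪ (T \ S) from rfl,
      ← Finset.prod_union disjoint_sdiff_sdiff]
  rw [hS, hT, hsymm]
  have h2 := chi_sq (S ∩ T) v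
  linear_combination chi (S \ T) v * chi (T \ S) v * h2

lemma sum_chi_mul_chi (S T : Finset (Fin d)) :
    ∑ v : Fin d → Bool, chi S v * chi T v = if S = T then (2 ^ d : ℝ) else 0 := by
  classical
  split_ifs with h
  · subst h
    rw [Finset.sum_congr rfl (fun v _ => chi_sq S v), Finset.sum_const, Finset.card_univ]
    simp [Fintype.card_fun]
  · rw [Finset.sum_congr rfl (fun v _ => chi_mul S T v)]
    apply sum_chi_zero
    rw [Finset.nonempty_iff_ne_empty]
    intro hempty
    exact h (by rwa [← Finset.symmDiff_eq_empty])

/-! ### The space of polynomial certificates -/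

/-- Index type for the basis of `W^r_{Q_d}`. -/
abbrev Idx (d r : ℕ) := Σ S : Finset (Fin d), Fin (r - S.card)

noncomputable def mpoly (S : Finset (Fin d)) : ℝ[X] := ∏ j ∈ S, (X - C (j : ℝ))

lemma mpoly_monic (S : Finset (Fin d)) : (mpoly S).Monic :=
  monic_prod_of_monic _ _ fun j _ => monic_X_sub_C _

lemma mpoly_natDegree (S : Finset (Fin d)) : (mpoly S).natDegree = S.card := by
  rw [mpoly, natDegree_prod _ _ fun j _ => X_sub_C_ne_zero _]
  simp only [natDegree_X_sub_C]
  simp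

lemma mpoly_eval_mem {S : Finset (Fin d)} {i : Fin d} (hi : i ∈ S) :
    (mpoly S).eval (i : ℝ) = 0 := by
  rw [mpoly, eval_prod]
  exact Finset.prod_eq_zero hi (by simp)

noncomputable def pA {r : ℕ} (a : Idx d r → ℝ) (v : Fin d → Bool) : ℝ[X] :=
  ∑ i : Idx d r, (a i * chi i.1 v) • (mpoly i.1 * X ^ (i.2 : ℕ))

lemma pA_add {r : ℕ} (a b : Idx d r → ℝ) (v : Fin d → Bool) :
    pA (a + b) v = pA a v + pA b v := by
  rw [pA, pA, pA, ← Finset.sum_add_distrib]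
  refine Finset.sum_congr rfl fun i _ => ?_
  rw [← add_smul, Pi.add_apply, add_mul]

lemma pA_smul {r : ℕ} (c : ℝ) (a : Idx d r → ℝ) (v : Fin d → Bool) :
    pA (c • a) v = c • pA a v := by
  rw [pA, pA, Finset.smul_sum]
  refine Finset.sum_congr rfl fun i _ => ?_
  rw [smul_smul, Pi.smul_apply, smul_eq_mul, mul_assoc]

lemma pA_natDegree_lt {r : ℕ} (hr : 1 ≤ r) (a : Idx d r → ℝ) (v : Fin d → Bool) :
    (pA a v).natDegree < r := by
  have h : (pA a v).natDegree ≤ r - 1 := by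
    refine Polynomial.natDegree_sum_le_of_forall_le _ _ fun i _ => ?_
    refine le_trans (Polynomial.natDegree_smul_le _ _) ?_
    refine le_trans (Polynomial.natDegree_mul_le) ?_
    rw [mpoly_natDegree, natDegree_X_pow]
    have := i.2.isLt
    omega
  omega

lemma pA_eval_flip {r : ℕ} (a : Idx d r → ℝ) (v : Fin d → Bool) (i : Fin d) :
    (pA a (flip i v)).eval (i : ℝ) = (pA a v).eval (i : ℝ) := by
  rw [pA, pA, eval_finset_sum, eval_finset_sum]
  refine Finset.sum_congr rfl fun j _ => ?_
  by_cases hi : i ∈ j.1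
  · simp [eval_smul, eval_mul, mpoly_eval_mem hi]
  · rw [chi_flip_not_mem hi]

open Classical in
noncomputable def Phi {r : ℕ} (a : Idx d r → ℝ) : Sym2 (Fin d → Bool) → ℝ :=
  Sym2.lift ⟨fun v w => if (hypercube d).Adj v w then
      ((pA a v).eval (col d s(v, w)) + (pA a w).eval (col d s(v, w))) / 2 else 0, by
    intro v w
    dsimp only
    by_cases h : (hypercube d).Adj v w
    · rw [if_pos h, if_pos h.symm, Sym2.eq_swap]
      ring
    · rw [if_neg h, if_neg fun h' => h h'.symm]⟩

open Classical in
lemma Phi_mk {r : ℕ} (a : Idx d r → ℝ) (v w : Fin d → Bool) :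
    Phi a s(v, w) = if (hypercube d).Adj v w then
      ((pA a v).eval (col d s(v, w)) + (pA a w).eval (col d s(v, w))) / 2 else 0 := rfl

lemma Phi_not_edge {r : ℕ} (a : Idx d r → ℝ) (e : Sym2 (Fin d → Bool))
    (he : e ∉ (hypercube d).edgeSet) : Phi a e = 0 := by
  induction e using Sym2.ind with
  | _ v w =>
    rw [SimpleGraph.mem_edgeSet] at he
    rw [Phi_mk, if_neg he]

lemma Phi_apply {r : ℕ} (a : Idx d r → ℝ) {v w : Fin d → Bool} (h : (hypercube d).Adj v w) :
    Phi a s(v, w) = (pA a v).eval (col d s(v, w)) := by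
  obtain ⟨i, rfl⟩ := adj_iff.1 h
  rw [Phi_mk, if_pos h, col_flip, pA_eval_flip]
  ring

lemma Phi_add {r : ℕ} (a b : Idx d r → ℝ) (e : Sym2 (Fin d → Bool)) :
    Phi (a + b) e = Phi a e + Phi b e := by
  induction e using Sym2.ind with
  | _ v w =>
    by_cases h : (hypercube d).Adj v w
    · have h1 : ∀ c : Idx d r → ℝ, Phi c s(v, w) = (pA c v).eval (col d s(v, w)) :=
        fun c => Phi_apply c h
      rw [h1, h1, h1, pA_add, eval_add]
    · have h1 : ∀ c : Idx d r → ℝ, Phi c s(v, w) = 0 := fun c =>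
        Phi_not_edge c _ (by rwa [SimpleGraph.mem_edgeSet])
      rw [h1, h1, h1, add_zero]

lemma Phi_smul {r : ℕ} (c : ℝ) (a : Idx d r → ℝ) (e : Sym2 (Fin d → Bool)) :
    Phi (c • a) e = c * Phi a e := by
  induction e using Sym2.ind with
  | _ v w =>
    by_cases h : (hypercube d).Adj v w
    · have h1 : ∀ b : Idx d r → ℝ, Phi b s(v, w) = (pA b v).eval (col d s(v, w)) :=
        fun b => Phi_apply b h
      rw [h1, h1, pA_smul, eval_smul, smul_eq_mul]
    · have h1 : ∀ b : Idx d r → ℝ, Phi b s(v, w) = 0 := fun b =>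
        Phi_not_edge b _ (by rwa [SimpleGraph.mem_edgeSet])
      rw [h1, h1, mul_zero]

/-- If `Phi a` vanishes on a percolating set, it vanishes on all edges. -/
lemma Phi_zero_edges {r : ℕ} (hr : 1 ≤ r) (a : Idx d r → ℝ) (F : Finset (Sym2 (Fin d → Bool)))
    (hperc : BondPercolates (hypercube d) r ↑F) (ha : ∀ e ∈ F, Phi a e = 0) :
    ∀ e ∈ (hypercube d).edgeSet, Phi a e = 0 := by
  classical
  intro e he
  refine hperc {e | Phi a e = 0} (fun e' he' => ha e' (by exact_mod_cast he')) ?_ he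
  intro v hv w hw
  have hzero : pA a v = 0 := by
    set A : Set (Fin d → Bool) := {u | (hypercube d).Adj v u ∧ s(v, u) ∈ {e | Phi a e = 0}}
      with hA
    have hAfin : A.Finite := Set.toFinite _
    set t : Finset ℝ := hAfin.toFinset.image (fun u => col d s(v, u)) with ht
    have hinj : Set.InjOn (fun u => col d s(v, u)) hAfin.toFinset := by
      intro u1 h1 u2 h2 hcol
      rw [Finset.mem_coe, Set.Finite.mem_toFinset] at h1 h2
      obtain ⟨i1, rfl⟩ := adj_iff.1 h1.1
      obtain ⟨i2, rfl⟩ := adj_iff.1 h2.1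
      simp only [col_flip] at hcol
      have hval : (i1 : ℕ) = (i2 : ℕ) :=
        Nat.cast_injective (by exact_mod_cast hcol : ((i1 : ℕ) : ℝ) = ((i2 : ℕ) : ℝ))
      rw [Fin.val_injective hval]
    have hcard : r ≤ t.card := by
      rw [Finset.card_image_of_injOn hinj]
      have : A.ncard = hAfin.toFinset.card := Set.ncard_eq_toFinset_card A hAfin
      omega
    refine Polynomial.eq_zero_of_natDegree_lt_card_of_eval_eq_zero' (pA a v) t ?_ ?_
    · intro x hx
      rw [ht, Finset.mem_image] at hx
      obtain ⟨u, hu, rfl⟩ := hx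
      rw [Set.Finite.mem_toFinset] at hu
      have := hu.2
      rw [Set.mem_setOf_eq, Phi_apply a hu.1] at this
      exact this
    · exact lt_of_lt_of_le (pA_natDegree_lt hr a v) hcard
  rw [Set.mem_setOf_eq, Phi_apply a hw, hzero, eval_zero]

/-- If `Phi a` vanishes on all edges then `a = 0`. -/
lemma a_eq_zero {r : ℕ} (hr : 1 ≤ r) (hrd : r ≤ d) (a : Idx d r → ℝ)
    (hz : ∀ e ∈ (hypercube d).edgeSet, Phi a e = 0) : a = 0 := by
  classical
  -- each vertex polynomial vanishes
  have hp : ∀ v : Fin d → Bool, pA a v = 0 := by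
    intro v
    refine Polynomial.eq_zero_of_natDegree_lt_card_of_eval_eq_zero (pA a v)
      (f := fun i : Fin d => (i : ℝ)) ?_ ?_ ?_
    · intro i1 i2 h
      exact Fin.val_injective (Nat.cast_injective h)
    · intro i
      have hadj := adj_flip i v
      have := hz s(v, flip i v) ((hypercube d).mem_edgeSet.2 hadj)
      rw [Phi_apply a hadj, col_flip] at this
      exact this
    · rw [Fintype.card_fin]
      exact lt_of_lt_of_le (pA_natDegree_lt hr a v) hrd
  funext i₀
  obtain ⟨S₀, k₀⟩ := i₀
  -- Fourier extraction
  have hsum : ∑ v : Fin d → Bool, chi S₀ v • pA a v = 0 := by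
    simp [hp]
  have hcomp : ∑ v : Fin d → Bool, chi S₀ v • pA a v
      = ∑ k : Fin (r - S₀.card), ((2 ^ d : ℝ) * a ⟨S₀, k⟩) • (mpoly S₀ * X ^ (k : ℕ)) := by
    have h1 : ∀ v : Fin d → Bool, chi S₀ v • pA a v
        = ∑ i : Idx d r, (chi S₀ v * chi i.1 v * a i) • (mpoly i.1 * X ^ (i.2 : ℕ)) := by
      intro v
      rw [pA, Finset.smul_sum]
      refine Finset.sum_congr rfl fun i _ => ?_
      rw [smul_smul]
      ring_nf
    rw [Finset.sum_congr rfl fun v _ => h1 v, Finset.sum_comm]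
    have h2 : ∀ i : Idx d r,
        ∑ v : Fin d → Bool, (chi S₀ v * chi i.1 v * a i) • (mpoly i.1 * X ^ (i.2 : ℕ))
        = ((if S₀ = i.1 then (2 ^ d : ℝ) else 0) * a i) • (mpoly i.1 * X ^ (i.2 : ℕ)) := by
      intro i
      rw [← Finset.sum_smul]
      congr 1
      rw [← Finset.sum_mul, sum_chi_mul_chi]
    rw [Finset.sum_congr rfl fun i _ => h2 i]
    rw [← Finset.univ_sigma_univ, Finset.sum_sigma]
    rw [Finset.sum_eq_single S₀]
    · refine Finset.sum_congr rfl fun k _ => ?_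
      rw [if_pos rfl]
    · intro S _ hS
      refine Finset.sum_eq_zero fun k _ => ?_
      rw [if_neg (fun h => hS h.symm), zero_mul, zero_smul]
    · intro h
      exact absurd (Finset.mem_univ S₀) h
  rw [hcomp] at hsum
  -- factor out mpoly
  have hfac : ∑ k : Fin (r - S₀.card), ((2 ^ d : ℝ) * a ⟨S₀, k⟩) • (mpoly S₀ * X ^ (k : ℕ))
      = mpoly S₀ * ∑ k : Fin (r - S₀.card), C ((2 ^ d : ℝ) * a ⟨S₀, k⟩) * X ^ (k : ℕ) := by
    rw [Finset.mul_sum]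
    refine Finset.sum_congr rfl fun k _ => ?_
    rw [smul_eq_C_mul]
    ring
  rw [hfac] at hsum
  have hq : ∑ k : Fin (r - S₀.card), C ((2 ^ d : ℝ) * a ⟨S₀, k⟩) * X ^ (k : ℕ) = 0 :=
    (mul_eq_zero.1 hsum).resolve_left (mpoly_monic S₀).ne_zero
  have hco := congrArg (fun p : ℝ[X] => p.coeff (k₀ : ℕ)) hq
  simp only [finset_sum_coeff, coeff_C_mul, coeff_X_pow, coeff_zero] at hco
  rw [Finset.sum_eq_single k₀] at hco
  · rw [if_pos rfl, mul_one] at hco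
    have h2d : (2 ^ d : ℝ) ≠ 0 := by positivity
    have := mul_eq_zero.1 hco
    simpa [h2d] using this
  · intro k _ hk
    rw [if_neg (fun h => hk (Fin.val_injective h.symm)), mul_zero]
  · intro h
    exact absurd (Finset.mem_univ k₀) h

/-- Cardinality of the index type. -/
lemma card_Idx {r : ℕ} (hrd : r ≤ d) : Fintype.card (Idx d r) = fval d r := by
  classical
  rw [Fintype.card_sigma]
  simp only [Fintype.card_fin]
  have h1 : (Finset.univ : Finset (Finset (Fin d))) = (Finset.univ : Finset (Fin d)).powerset :=
    Finset.powerset_univ.symm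
  rw [h1, Finset.sum_powerset_apply_card (f := fun k => r - k), Finset.card_univ,
    Fintype.card_fin]
  rw [fval]
  rw [← Finset.sum_subset (Finset.range_subset_range.2 (by omega : r ≤ d + 1))]
  · refine Finset.sum_congr rfl fun k hk => ?_
    rw [smul_eq_mul]
  · intro k _ hk
    rw [Finset.mem_range, not_lt] at hk
    have : r - k = 0 := by omega
    rw [this, smul_zero]

/-- The lower bound. -/
lemma fval_le_mEdge {r : ℕ} (hr : 1 ≤ r) (hrd : r ≤ d) :
    fval d r ≤ mEdge (hypercube d) r := by
  classical
  obtain ⟨F, hFsub, hFperc, hFcard⟩ := exists_min_percolating (hypercube d) r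
  let L : (Idx d r → ℝ) →ₗ[ℝ] ((e : F) → ℝ) :=
    { toFun := fun a e => Phi a e.1
      map_add' := fun a b => funext fun e => Phi_add a b e.1
      map_smul' := fun c a => funext fun e => Phi_smul c a e.1 }
  have hinj : Function.Injective L := by
    rw [← LinearMap.ker_eq_bot, LinearMap.ker_eq_bot']
    intro a ha
    refine a_eq_zero hr hrd a ?_
    have haF : ∀ e ∈ F, Phi a e = 0 := by
      intro e he
      exact congrFun ha ⟨e, he⟩
    exact Phi_zero_edges hr a F hFperc haF
  have hle := LinearMap.finrank_le_finrank_of_injective hinj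
  rw [Module.finrank_fintype_fun_eq_card, Module.finrank_fintype_fun_eq_card,
    card_Idx hrd, Fintype.card_coe] at hle
  omega

/-- Main result: `m_e(Q_d, r) = fval d r` for all `r ≤ d`. -/
lemma mEdge_hypercube (d : ℕ) : ∀ r : ℕ, r ≤ d → mEdge (hypercube d) r = fval d r := by
  induction d with
  | zero =>
    intro r hr
    obtain rfl : r = 0 := Nat.le_zero.1 hr
    rw [mEdge_zero, fval_zero]
  | succ m ih =>
    intro r hr
    rcases Nat.eq_zero_or_pos r with rfl | hr1
    · rw [mEdge_zero, fval_zero]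
    rcases eq_or_lt_of_le hr with rfl | hlt
    · refine le_antisymm (mEdge_le_fval_self (m + 1) (by omega)) (fval_le_mEdge hr1 le_rfl)
    · have hrm : r ≤ m := by omega
      refine le_antisymm ?_ (fval_le_mEdge hr1 hr)
      calc mEdge (hypercube (m + 1)) r
          ≤ mEdge (hypercube m) r + mEdge (hypercube m) (r - 1) := mEdge_succ_le hr1 hrm
        _ = fval m r + fval m (r - 1) := by rw [ih r hrm, ih (r - 1) (by omega)]
        _ = fval (m + 1) r := (fval_succ m r hr1).symm

end Stmt12Aux

/-- For `d > r ≥ 1`, `m_e(Q_d, r) = m_e(Q_{d-1}, r) + m_e(Q_{d-1}, r-1)`. -/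
theorem stmt12 (d r : ℕ) (hr : 1 ≤ r) (hd : r < d) :
    mEdge (hypercube d) r = mEdge (hypercube (d - 1)) r + mEdge (hypercube (d - 1)) (r - 1) := by
  obtain ⟨m, rfl⟩ : ∃ m, d = m + 1 := ⟨d - 1, by omega⟩
  rw [Nat.add_sub_cancel, Stmt12Aux.mEdge_hypercube (m + 1) r (by omega),
    Stmt12Aux.mEdge_hypercube m r (by omega), Stmt12Aux.mEdge_hypercube m (r - 1) (by omega)]
  exact Stmt12Aux.fval_succ m r hr
end

section
/- Let d ≥ r ≥ 1 be integers. Define F_r(Q_d) to be the set of edges of Q_d of the form {x, δ_j x} with j ∈ {1,…,d} and x_1 + x_2 + … + x_{j−1} ≥ d − r, where δ_j x denotes the vector obtained from x by flipping its j-th coordinate (note the condition does not involve x_j, so it is well-defined on the unordered edge). Then F_r(Q_d) is a percolating set for the r-bond bootstrap percolation process on Q_d. -/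
open Polynomial

/-- The set `F_r(Q_d)` of edges `{x, δ_j x}` of the hypercube (where `δ_j x` flips the `j`-th
coordinate of `x`) such that the number of coordinates `i < j` with `x i = true` is at least
`d - r`. (Coordinates are indexed `0, …, d-1`, corresponding to the paper's `1, …, d`; the
condition does not involve coordinate `j`, so it is well defined on the unordered edge.) -/
def hcubeF (d r : ℕ) : Set (Sym2 (Fin d → Bool)) :=
  {e | ∃ (x : Fin d → Bool) (j : Fin d),
    e = s(x, Function.update x j (!x j)) ∧
      d - r ≤ (Finset.univ.filter (fun i : Fin d => i < j ∧ x i = true)).card}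

namespace Stmt13Aux

variable {d r : ℕ}

/-- number of `true` coordinates before `j`. -/
def cnt (x : Fin d → Bool) (j : Fin d) : ℕ :=
  (Finset.univ.filter (fun i : Fin d => i < j ∧ x i = true)).card

/-- number of `false` coordinates. -/
def zcount (x : Fin d → Bool) : ℕ :=
  (Finset.univ.filter (fun i : Fin d => x i = false)).card

lemma cnt_strict {x : Fin d → Bool} {j₁ j₂ : Fin d} (h : j₁ < j₂) (hx : x j₁ = true) :
    cnt x j₁ < cnt x j₂ := by
  have hsub : insert j₁ (Finset.univ.filter (fun i : Fin d => i < j₁ ∧ x i = true)) ⊆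
      Finset.univ.filter (fun i : Fin d => i < j₂ ∧ x i = true) := by
    intro i hi
    rcases Finset.mem_insert.1 hi with rfl | hi
    · simp [h, hx]
    · simp only [Finset.mem_filter, Finset.mem_univ, true_and] at hi ⊢
      exact ⟨hi.1.trans h, hi.2⟩
  have hnot : j₁ ∉ Finset.univ.filter (fun i : Fin d => i < j₁ ∧ x i = true) := by simp
  have := Finset.card_le_card hsub
  rw [Finset.card_insert_of_notMem hnot] at this
  exact this

lemma count_ge (hd : r ≤ d) (x : Fin d → Bool) :
    r ≤ (Finset.univ.filter (fun j : Fin d => x j = false ∨ d - r ≤ cnt x j)).card := by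
  classical
  set C := Finset.univ.filter (fun j : Fin d => x j = true ∧ cnt x j < d - r) with hC
  have hCcard : C.card ≤ d - r := by
    have h1 : C.card ≤ (Finset.range (d - r)).card := by
      apply Finset.card_le_card_of_injOn (fun j => cnt x j)
      · intro j hj
        rw [Finset.mem_coe, hC, Finset.mem_filter] at hj
        simpa using hj.2.2
      · intro j₁ h₁ j₂ h₂ he
        rw [Finset.mem_coe, hC, Finset.mem_filter] at h₁ h₂
        replace h₁ := h₁.2; replace h₂ := h₂.2
        by_contra hne
        rcases lt_or_gt_of_ne hne with h | h
        · exact absurd he (Nat.ne_of_lt (cnt_strict h h₁.1))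
        · exact absurd he.symm (Nat.ne_of_lt (cnt_strict h h₂.1))
    simpa using h1
  have hcompl : Finset.univ.filter (fun j : Fin d => x j = false ∨ d - r ≤ cnt x j) = Cᶜ := by
    ext j
    simp only [hC, Finset.mem_filter, Finset.mem_univ, true_and, Finset.mem_compl]
    cases hxj : x j <;> simp [hxj] <;> omega
  rw [hcompl, Finset.card_compl]
  simp only [Fintype.card_fun, Fintype.card_fin, Fintype.card_bool]
  omega

lemma adj_update (x : Fin d → Bool) (j : Fin d) :
    (hypercube d).Adj x (Function.update x j (!x j)) := by
  refine ⟨j, ?_, ?_⟩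
  · simp
  · intro i hi
    by_contra hne
    rw [Function.update_of_ne hne] at hi
    exact hi rfl

lemma update_update (x : Fin d → Bool) (j : Fin d) :
    Function.update (Function.update x j (!x j)) j
      (!(Function.update x j (!x j)) j) = x := by
  simp [Function.update_idem, Function.update_self, Function.update_eq_self]

lemma zcount_update_lt {x : Fin d → Bool} {j : Fin d} (hx : x j = false) :
    zcount (Function.update x j (!x j)) < zcount x := by
  apply Finset.card_lt_card
  constructor
  · intro i hi
    simp only [Finset.mem_filter, Finset.mem_univ, true_and] at hi ⊢
    by_cases h : i = j
    · subst h; rw [Function.update_self, hx] at hi; simp at hi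
    · rwa [Function.update_of_ne h] at hi
  · intro hsub
    have hj : j ∈ Finset.univ.filter (fun i : Fin d => x i = false) := by simp [hx]
    have := hsub hj
    simp [Function.update_self, hx] at this

lemma update_injective (x : Fin d → Bool) :
    Function.Injective (fun j : Fin d => Function.update x j (!x j)) := by
  intro j₁ j₂ h
  by_contra hne
  have h1 : Function.update x j₁ (!x j₁) j₁ = Function.update x j₂ (!x j₂) j₁ := congrFun h j₁
  rw [Function.update_self, Function.update_of_ne hne] at h1
  exact (Bool.not_ne_self (x j₁)) h1

lemma main (hd : r ≤ d) (S : Set (Sym2 (Fin d → Bool)))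
    (hFS : hcubeF d r ⊆ S) (hS : BondClosed (hypercube d) r S) :
    ∀ n (x : Fin d → Bool), zcount x = n →
      ∀ w, (hypercube d).Adj x w → s(x, w) ∈ S := by
  intro n
  induction n using Nat.strong_induction_on with
  | _ n ih =>
    intro x hx w hw
    apply hS x _ w hw
    classical
    set T := Finset.univ.filter (fun j : Fin d => x j = false ∨ d - r ≤ cnt x j) with hT
    set f : Fin d → (Fin d → Bool) := fun j => Function.update x j (!x j) with hf
    have hsub : (↑(T.image f) : Set (Fin d → Bool)) ⊆
        {u | (hypercube d).Adj x u ∧ s(x, u) ∈ S} := by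
      intro u hu
      simp only [Finset.coe_image, Set.mem_image, Finset.mem_coe] at hu
      obtain ⟨j, hj, rfl⟩ := hu
      refine ⟨adj_update x j, ?_⟩
      rw [hT, Finset.mem_filter] at hj
      rcases hj.2 with hfalse | hcnt
      · have hlt : zcount (f j) < n := hx ▸ zcount_update_lt hfalse
        have hadj : (hypercube d).Adj (f j) x := by
          have := adj_update (f j) j
          rwa [hf, update_update x j] at this
        have := ih _ hlt (f j) rfl x hadj
        rwa [Sym2.eq_swap] at this
      · exact hFS ⟨x, j, rfl, hcnt⟩
    calc r ≤ T.card := count_ge hd x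
      _ = (T.image f).card := (Finset.card_image_of_injective T (update_injective x)).symm
      _ = (↑(T.image f) : Set (Fin d → Bool)).ncard := (Set.ncard_coe_finset _).symm
      _ ≤ _ := Set.ncard_le_ncard hsub (Set.toFinite _)

end Stmt13Aux

/-- For `d ≥ r ≥ 1`, the set `F_r(Q_d)` percolates in the `r`-bond bootstrap
process on `Q_d`. -/
theorem stmt13 (d r : ℕ) (hr : 1 ≤ r) (hd : r ≤ d) :
    BondPercolates (hypercube d) r (hcubeF d r) := by
  intro S hFS hS e he
  induction e using Sym2.ind with
  | _ a b =>
    exact Stmt13Aux.main hd S hFS hS (Stmt13Aux.zcount a) a rfl b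
      ((hypercube d).mem_edgeSet.1 he)
end

section
/- Let H = (V,E) be a finite hypergraph (E a collection of subsets of V), let r ≥ 0 be an integer, and let c : V → ℝ be a colouring that assigns distinct values to the vertices within each hyperedge. Let W be the real vector space of all functions φ : V → ℝ for which there exist real univariate polynomials p_S (S ∈ E), each of degree at most r−1 (for r = 0 this forces p_S = 0), such that p_S(c(v)) = φ(v) for every S ∈ E and every v ∈ S. Consider the process in which one starts with a set A ⊆ V of infected vertices and, at each step, if some hyperedge S ∈ E contains at least r infected vertices, then all vertices of S become infected; A percolates if eventually every vertex of V is infected. Then the minimum size of a percolating set A is at least dim(W). -/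
open Polynomial

/-- A set `T` of vertices is closed under the `r`-infection rule of the hypergraph with
hyperedge collection `E`: if a hyperedge contains at least `r` vertices of `T`, then all of
its vertices are in `T`. -/
def HyperClosed {V : Type*} (E : Set (Set V)) (r : ℕ) (T : Set V) : Prop :=
  ∀ S ∈ E, r ≤ (S ∩ T).ncard → S ⊆ T

/-- `A` percolates: every closed set of vertices containing `A` is all of `V`. -/
def HyperPercolates {V : Type*} (E : Set (Set V)) (r : ℕ) (A : Set V) : Prop :=
  ∀ T : Set V, A ⊆ T → HyperClosed E r T → ∀ v : V, v ∈ T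

/-- The space `W` of functions `φ : V → ℝ` recognized by polynomials `p_S` of degree at most
`r - 1` (i.e. degree `< r`) attached to the hyperedges: `p_S(c v) = φ v` for all `S ∈ E` and
`v ∈ S`. -/
noncomputable def hyperW {V : Type*} (E : Set (Set V)) (c : V → ℝ) (r : ℕ) :
    Submodule ℝ (V → ℝ) where
  carrier := {φ | ∃ p : Set V → ℝ[X], (∀ S, (p S).degree < (r : WithBot ℕ)) ∧
    ∀ S ∈ E, ∀ v ∈ S, (p S).eval (c v) = φ v}
  zero_mem' := ⟨fun _ => 0,
    fun _ => by simp [Polynomial.degree_zero],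
    fun _ _ _ _ => by simp⟩
  add_mem' := by
    rintro φ ψ ⟨p, hp, hpe⟩ ⟨q, hq, hqe⟩
    exact ⟨fun S => p S + q S,
      fun S => lt_of_le_of_lt (Polynomial.degree_add_le _ _) (max_lt (hp S) (hq S)),
      fun S hS v hv => by simp [hpe S hS v hv, hqe S hS v hv]⟩
  smul_mem' := by
    rintro a φ ⟨p, hp, hpe⟩
    exact ⟨fun S => a • p S,
      fun S => lt_of_le_of_lt (Polynomial.degree_smul_le _ _) (hp S),
      fun S hS v hv => by simp [hpe S hS v hv]⟩

/-- Let `H = (V, E)` be a finite hypergraph, `r ≥ 0`, and let `c : V → ℝ`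
assign distinct values to the vertices within each hyperedge. Then every percolating set of
vertices has size at least `dim W`. -/
theorem stmt16 {V : Type*} [Fintype V] (E : Set (Set V)) (r : ℕ) (c : V → ℝ)
    (hc : ∀ S ∈ E, Set.InjOn c S) (A : Finset V) (hA : HyperPercolates E r ↑A) :
    Module.finrank ℝ (hyperW E c r) ≤ A.card := by
  classical
  -- restriction map to A
  let f : hyperW E c r →ₗ[ℝ] (A → ℝ) :=
    { toFun := fun φ a => (φ : V → ℝ) a
      map_add' := fun φ ψ => rfl
      map_smul' := fun a φ => rfl }
  have hinj : Function.Injective f := by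
    rw [injective_iff_map_eq_zero]
    rintro ⟨φ, p, hp, hpe⟩ hφ
    have hφA : ∀ a ∈ A, φ a = 0 := fun a ha => congrFun hφ ⟨a, ha⟩
    -- the zero set of φ is closed
    set T : Set V := {v | φ v = 0} with hT
    have hclosed : HyperClosed E r T := by
      intro S hS hcard v hv
      -- p S vanishes on c '' (S ∩ T), which has ≥ r elements
      have hfin : (S ∩ T).Finite := Set.toFinite _
      have hzero : p S = 0 := by
        by_contra hne
        have hdeg : (p S).natDegree < r := by
          have := hp S
          rwa [degree_eq_natDegree hne, Nat.cast_lt] at this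
        have := Polynomial.eq_zero_of_natDegree_lt_card_of_eval_eq_zero' (p S)
          (hfin.toFinset.image c) ?_ ?_
        · exact hne this
        · intro x hx
          simp only [Finset.mem_image, Set.Finite.mem_toFinset] at hx
          obtain ⟨u, hu, rfl⟩ := hx
          rw [hpe S hS u hu.1]
          exact hu.2
        · refine lt_of_lt_of_le (lt_of_lt_of_le hdeg hcard) ?_
          rw [Finset.card_image_of_injOn
            (by rw [Set.Finite.coe_toFinset]
                exact (hc S hS).mono Set.inter_subset_left),
            Set.ncard_eq_toFinset_card _ hfin]
      have := hpe S hS v hv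
      rw [hzero] at this
      exact (by simpa using this.symm : φ v = 0)
    have := hA T (fun a ha => hφA a ha) hclosed
    exact Subtype.ext (funext fun v => this v)
  calc Module.finrank ℝ (hyperW E c r) ≤ Module.finrank ℝ (A → ℝ) :=
        LinearMap.finrank_le_finrank_of_injective hinj
    _ = A.card := by simp
end
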